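/- Protocol ordering on the permutation network: for N ≥ 7 agents, seed set S₀ = {j}, and all indices with 3 ≤ i ≤ N−3 and j ∈ {2, …, i−2} ∪ {i+2, …, N−2}, the steady-state activation probabilities satisfy the strict inequalities ℙ^{𝒢_P, OR}(i) > ℙ^{G_C}(i) > ℙ^{𝒢_P, AND}(i), where ℙ^{𝒢_P, OR}(i) (respectively ℙ^{𝒢_P, AND}(i)) is the probability that agent i is active at steady state of the multiplex LTM on the duplex permutation network 𝒢_P with all agents using Protocol OR (respectively Protocol AND), and ℙ^{G_C}(i) is the corresponding probability on the monoplex cycle network G_C. Equivalently, in terms of the explicit formulas, (3/4)^{d} + (1/2)(3/4)^{N−d−3} − (1/2)(3/4)^{N−5} > (1/2)^{d} + (1/2)^{N−d} > (1/4)^{d} for d = |i−j|. -/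

import Mathlib

open MeasureTheory

inductive Protocol
  | OR
  | AND
deriving DecidableEq

noncomputable def ltmStep {n m : ℕ} (w : Fin m → Fin n → Fin n → ℝ)
    (u : Fin n → Protocol) (μ : Fin n → Fin m → ℝ)
    (A : Finset (Fin n)) : Finset (Fin n) :=
  A ∪ Finset.univ.filter fun i =>
    (u i = Protocol.OR ∧ ∃ k, μ i k < ∑ j ∈ A, w k i j) ∨
    (u i = Protocol.AND ∧ ∀ k, μ i k < ∑ j ∈ A, w k i j)

noncomputable def ltmSS {n m : ℕ} (w : Fin m → Fin n → Fin n → ℝ)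
    (u : Fin n → Protocol) (S₀ : Finset (Fin n))
    (μ : Fin n → Fin m → ℝ) : Finset (Fin n) :=
  (ltmStep w u μ)^[n] S₀

noncomputable def thMeasure (n m : ℕ) : Measure (Fin n → Fin m → ℝ) :=
  Measure.pi fun _ => Measure.pi fun _ => volume.restrict (Set.Icc (0:ℝ) 1)

noncomputable def pLTM {n m : ℕ} (w : Fin m → Fin n → Fin n → ℝ)
    (u : Fin n → Protocol) (S₀ : Finset (Fin n)) (i : Fin n) : ℝ :=
  (thMeasure n m {μ | i ∈ ltmSS w u S₀ μ}).toReal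

def lemStep {n m : ℕ} (S₀ : Finset (Fin n)) (u : Fin n → Protocol)
    (σ : Fin n → Fin m → Fin n) (A : Finset (Fin n)) : Finset (Fin n) :=
  S₀ ∪ A ∪ Finset.univ.filter fun i =>
    (u i = Protocol.OR ∧ ∃ k, σ i k ∈ A) ∨
    (u i = Protocol.AND ∧ ∀ k, σ i k ∈ A)

def UReachable {n m : ℕ} (S₀ : Finset (Fin n)) (u : Fin n → Protocol)
    (σ : Fin n → Fin m → Fin n) (i : Fin n) : Prop :=
  i ∈ (lemStep S₀ u σ)^[n] S₀

instance {n m : ℕ} (S₀ : Finset (Fin n)) (u : Fin n → Protocol)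
    (σ : Fin n → Fin m → Fin n) (i : Fin n) : Decidable (UReachable S₀ u σ i) := by
  unfold UReachable; infer_instance

noncomputable def rProb {n m : ℕ} (w : Fin m → Fin n → Fin n → ℝ)
    (S₀ : Finset (Fin n)) (u : Fin n → Protocol) (i : Fin n) : ℝ :=
  ∑ σ : Fin n → Fin m → Fin n,
    if UReachable S₀ u σ i then ∏ a : Fin n, ∏ k : Fin m, w k a (σ a k) else 0

noncomputable def casCen {n m : ℕ} (w : Fin m → Fin n → Fin n → ℝ)
    (u : Fin n → Protocol) (j : Fin n) : ℝ :=
  ∑ i : Fin n, pLTM w u {j} i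

noncomputable def pathW (N : ℕ) (i j : Fin N) : ℝ :=
  if j.val = i.val + 1 ∨ i.val = j.val + 1 then
    (if i.val = 0 ∨ i.val = N - 1 then 1 else 1/2)
  else 0

noncomputable def cycleW (N : ℕ) (i j : Fin N) : ℝ :=
  if (i.val + 1) % N = j.val ∨ (j.val + 1) % N = i.val then 1/2 else 0

noncomputable def permW2 (N : ℕ) (i j : Fin N) : ℝ :=
  if ((i.val + 1) % N = j.val ∨ (j.val + 1) % N = i.val) ∧
      ¬((i.val = N - 2 ∧ j.val = N - 1) ∨ (i.val = N - 1 ∧ j.val = N - 2)) then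
    (if i.val = N - 2 ∨ i.val = N - 1 then 1 else 1/2)
  else 0

open Finset in
/-- The activation predicate of the LTM. -/
def actPred {n m : ℕ} (w : Fin m → Fin n → Fin n → ℝ)
    (u : Fin n → Protocol) (μ : Fin n → Fin m → ℝ) (a : Fin n) (A : Finset (Fin n)) : Prop :=
  (u a = Protocol.OR ∧ ∃ k, μ a k < ∑ b ∈ A, w k a b) ∨
  (u a = Protocol.AND ∧ ∀ k, μ a k < ∑ b ∈ A, w k a b)

lemma mem_ltmStep_iff {n m : ℕ} {w : Fin m → Fin n → Fin n → ℝ}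
    {u : Fin n → Protocol} {μ : Fin n → Fin m → ℝ} {A : Finset (Fin n)} {a : Fin n} :
    a ∈ ltmStep w u μ A ↔ a ∈ A ∨ actPred w u μ a A := by
  simp [ltmStep, actPred]

lemma subset_ltmStep {n m : ℕ} (w : Fin m → Fin n → Fin n → ℝ)
    (u : Fin n → Protocol) (μ : Fin n → Fin m → ℝ) (A : Finset (Fin n)) :
    A ⊆ ltmStep w u μ A := Finset.subset_union_left

lemma subset_iterate {n m : ℕ} (w : Fin m → Fin n → Fin n → ℝ)
    (u : Fin n → Protocol) (μ : Fin n → Fin m → ℝ) (A : Finset (Fin n)) (t : ℕ) :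
    A ⊆ (ltmStep w u μ)^[t] A := by
  induction t with
  | zero => simp
  | succ t ih =>
    rw [Function.iterate_succ_apply']
    exact ih.trans (subset_ltmStep _ _ _ _)

lemma iterate_subset_iterate {n m : ℕ} (w : Fin m → Fin n → Fin n → ℝ)
    (u : Fin n → Protocol) (μ : Fin n → Fin m → ℝ) (A : Finset (Fin n)) {s t : ℕ}
    (h : s ≤ t) : (ltmStep w u μ)^[s] A ⊆ (ltmStep w u μ)^[t] A := by
  obtain ⟨r, rfl⟩ := Nat.exists_eq_add_of_le h
  rw [Nat.add_comm, Function.iterate_add_apply]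
  exact subset_iterate _ _ _ _ _

/-- Chain reachability: if there is a chain of activations from the seed set to `f d`,
then `f d` is in the steady state. -/
lemma chain_reach {n m : ℕ} {w : Fin m → Fin n → Fin n → ℝ}
    {u : Fin n → Protocol} {μ : Fin n → Fin m → ℝ} {S₀ : Finset (Fin n)}
    (f : ℕ → Fin n) (d : ℕ) (hd : d ≤ n) (h0 : f 0 ∈ S₀)
    (hstep : ∀ r < d, ∀ A : Finset (Fin n), f r ∈ A → actPred w u μ (f (r + 1)) A) :
    f d ∈ ltmSS w u S₀ μ := by
  have key : ∀ r, r ≤ d → f r ∈ (ltmStep w u μ)^[r] S₀ := by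
    intro r hr
    induction r with
    | zero => simpa using h0
    | succ r ih =>
      rw [Function.iterate_succ_apply']
      rw [mem_ltmStep_iff]
      exact Or.inr (hstep r (by omega) _ (ih (by omega)))
  exact iterate_subset_iterate w u μ S₀ hd (key d le_rfl)

/-- Blocking: if no member of `D` can ever activate while the active set is disjoint
from `D`, and the seed is disjoint from `D`, then no member of `D` is ever active. -/
lemma blocking {n m : ℕ} {w : Fin m → Fin n → Fin n → ℝ}
    {u : Fin n → Protocol} {μ : Fin n → Fin m → ℝ} {S₀ : Finset (Fin n)}
    {D : Finset (Fin n)}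
    (hD : ∀ a ∈ D, ∀ A : Finset (Fin n), (∀ x ∈ A, x ∉ D) → ¬ actPred w u μ a A)
    (hS0 : ∀ x ∈ S₀, x ∉ D) : ∀ a ∈ ltmSS w u S₀ μ, a ∉ D := by
  have key : ∀ t, ∀ a ∈ (ltmStep w u μ)^[t] S₀, a ∉ D := by
    intro t
    induction t with
    | zero => simpa using hS0
    | succ t ih =>
      rw [Function.iterate_succ_apply']
      intro a ha
      rw [mem_ltmStep_iff] at ha
      rcases ha with ha | ha
      · exact ih a ha
      · intro haD
        exact hD a haD _ ih ha
  exact key n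

lemma sum_le_single_nbr {n : ℕ} {g : Fin n → ℝ} {A : Finset (Fin n)} (x : Fin n) {c : ℝ}
    (hc : 0 ≤ c) (h : ∀ b ∈ A, g b ≤ if b = x then c else 0) :
    ∑ b ∈ A, g b ≤ c := by
  calc ∑ b ∈ A, g b ≤ ∑ b ∈ A, (if b = x then c else 0) := Finset.sum_le_sum h
  _ = if x ∈ A then c else 0 := Finset.sum_ite_eq' A x fun _ => c
  _ ≤ c := by split <;> simp [hc]

open Finset in
instance vol01_prob : IsProbabilityMeasure (volume.restrict (Set.Icc (0:ℝ) 1)) := by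
  constructor
  rw [Measure.restrict_apply_univ, Real.volume_Icc]
  norm_num

instance thMeasure_prob (n m : ℕ) : IsProbabilityMeasure (thMeasure n m) := by
  unfold thMeasure; infer_instance

/-- The inner (per-agent) threshold measure. -/
noncomputable abbrev thetaM (m : ℕ) : Measure (Fin m → ℝ) :=
  Measure.pi fun _ => volume.restrict (Set.Icc (0:ℝ) 1)

lemma prodEvent {N m : ℕ} (C : Finset (Fin N)) (G : Fin N → Set (Fin m → ℝ)) :
    thMeasure N m {μ | ∀ a ∈ C, μ a ∈ G a} = ∏ a ∈ C, thetaM m (G a) := by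
  have hset : {μ : Fin N → Fin m → ℝ | ∀ a ∈ C, μ a ∈ G a} =
      Set.pi Set.univ (fun a => if a ∈ C then G a else Set.univ) := by
    ext μ
    simp only [Set.mem_setOf_eq, Set.mem_pi, Set.mem_univ, forall_true_left]
    constructor
    · intro h a
      by_cases ha : a ∈ C <;> simp [ha, h]
    · intro h a ha
      have := h a
      simpa [ha] using this
  rw [hset]
  unfold thMeasure
  rw [MeasureTheory.Measure.pi_pi]
  rw [← Finset.prod_subset (Finset.subset_univ C) (fun x _ hx => by simp [hx])]
  exact Finset.prod_congr rfl fun a ha => by simp [ha]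

lemma vol01_Iio {x : ℝ} (h0 : 0 ≤ x) (h1 : x ≤ 1) :
    (volume.restrict (Set.Icc (0:ℝ) 1)) (Set.Iio x) = ENNReal.ofReal x := by
  rw [Measure.restrict_apply measurableSet_Iio]
  have : Set.Iio x ∩ Set.Icc (0:ℝ) 1 = Set.Ico 0 x := by
    ext y
    simp only [Set.mem_inter_iff, Set.mem_Iio, Set.mem_Icc, Set.mem_Ico]
    constructor
    · rintro ⟨h, h2, h3⟩; exact ⟨h2, h⟩
    · rintro ⟨h2, h⟩; exact ⟨h, h2, by linarith⟩
  rw [this, Real.volume_Ico, sub_zero]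

lemma vol01_Ici {x : ℝ} (h0 : 0 ≤ x) (h1 : x ≤ 1) :
    (volume.restrict (Set.Icc (0:ℝ) 1)) (Set.Ici x) = ENNReal.ofReal (1 - x) := by
  rw [Measure.restrict_apply measurableSet_Ici]
  have : Set.Ici x ∩ Set.Icc (0:ℝ) 1 = Set.Icc x 1 := by
    ext y
    simp only [Set.mem_inter_iff, Set.mem_Ici, Set.mem_Icc]
    constructor
    · rintro ⟨h, _, h3⟩; exact ⟨h, h3⟩
    · rintro ⟨h, h3⟩; exact ⟨h, by linarith, h3⟩
  rw [this, Real.volume_Icc]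

lemma theta2_pair (s t : Set ℝ) :
    thetaM 2 {g | g 0 ∈ s ∧ g 1 ∈ t} =
      (volume.restrict (Set.Icc (0:ℝ) 1)) s * (volume.restrict (Set.Icc (0:ℝ) 1)) t := by
  have hset : {g : Fin 2 → ℝ | g 0 ∈ s ∧ g 1 ∈ t} =
      Set.pi Set.univ (fun k => if k = 0 then s else t) := by
    ext g
    simp only [Set.mem_setOf_eq, Set.mem_pi, Set.mem_univ, forall_true_left]
    rw [Fin.forall_fin_two]
    simp
  rw [hset, MeasureTheory.Measure.pi_pi, Fin.prod_univ_two]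
  simp

lemma theta1_val (s : Set ℝ) :
    thetaM 1 {g | g 0 ∈ s} = (volume.restrict (Set.Icc (0:ℝ) 1)) s := by
  have hset : {g : Fin 1 → ℝ | g 0 ∈ s} = Set.pi Set.univ (fun _ => s) := by
    ext g
    simp only [Set.mem_setOf_eq, Set.mem_pi, Set.mem_univ, forall_true_left]
    constructor
    · intro h k; rw [Fin.eq_zero k]; exact h
    · intro h; exact h 0
  rw [hset, MeasureTheory.Measure.pi_pi, Fin.prod_univ_one]

open Finset in
lemma vHalf0 : thetaM 2 {g | g 0 < 1/2} = ENNReal.ofReal (1/2) := by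
  have : {g : Fin 2 → ℝ | g 0 < 1/2} = {g | g 0 ∈ Set.Iio (1/2) ∧ g 1 ∈ Set.univ} := by
    ext g; simp
  rw [this, theta2_pair, vol01_Iio (by norm_num) (by norm_num)]
  simp

lemma vHalf1 : thetaM 2 {g | g 1 < 1/2} = ENNReal.ofReal (1/2) := by
  have : {g : Fin 2 → ℝ | g 1 < 1/2} = {g | g 0 ∈ Set.univ ∧ g 1 ∈ Set.Iio (1/2)} := by
    ext g; simp
  rw [this, theta2_pair, vol01_Iio (by norm_num) (by norm_num)]
  simp

lemma vOne0 : thetaM 2 {g | g 0 < 1} = ENNReal.ofReal 1 := by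
  have : {g : Fin 2 → ℝ | g 0 < 1} = {g | g 0 ∈ Set.Iio 1 ∧ g 1 ∈ Set.univ} := by
    ext g; simp
  rw [this, theta2_pair, vol01_Iio (by norm_num) (by norm_num)]
  simp

lemma vOne1 : thetaM 2 {g | g 1 < 1} = ENNReal.ofReal 1 := by
  have : {g : Fin 2 → ℝ | g 1 < 1} = {g | g 0 ∈ Set.univ ∧ g 1 ∈ Set.Iio 1} := by
    ext g; simp
  rw [this, theta2_pair, vol01_Iio (by norm_num) (by norm_num)]
  simp

lemma vBoth : thetaM 2 {g | g 0 < 1/2 ∧ g 1 < 1/2} = ENNReal.ofReal (1/4) := by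
  have : {g : Fin 2 → ℝ | g 0 < 1/2 ∧ g 1 < 1/2} =
      {g | g 0 ∈ Set.Iio (1/2) ∧ g 1 ∈ Set.Iio (1/2)} := by ext g; simp
  rw [this, theta2_pair, vol01_Iio (by norm_num) (by norm_num),
    ← ENNReal.ofReal_mul (by norm_num)]
  norm_num

lemma vOr : thetaM 2 {g | g 0 < 1/2 ∨ g 1 < 1/2} = ENNReal.ofReal (3/4) := by
  have hc : {g : Fin 2 → ℝ | g 0 < 1/2 ∨ g 1 < 1/2} =
      {g : Fin 2 → ℝ | g 0 ∈ Set.Ici (1/2:ℝ) ∧ g 1 ∈ Set.Ici (1/2:ℝ)}ᶜ := by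
    ext g
    simp only [Set.mem_setOf_eq, Set.mem_compl_iff, Set.mem_Ici, not_and_or, not_le]
  have hm : MeasurableSet {g : Fin 2 → ℝ | g 0 ∈ Set.Ici (1/2:ℝ) ∧ g 1 ∈ Set.Ici (1/2:ℝ)} := by
    apply MeasurableSet.inter
    · exact measurable_pi_apply 0 measurableSet_Ici
    · exact measurable_pi_apply 1 measurableSet_Ici
  rw [hc, measure_compl hm (measure_ne_top _ _), theta2_pair,
    vol01_Ici (by norm_num) (by norm_num), ← ENNReal.ofReal_mul (by norm_num)]
  rw [measure_univ]
  rw [show ((1:ℝ) - 1/2) * (1 - 1/2) = 1/4 by norm_num]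
  rw [show (1 : ENNReal) = ENNReal.ofReal 1 by simp]
  rw [← ENNReal.ofReal_sub _ (by norm_num)]
  norm_num

lemma v1Half : thetaM 1 {g | g 0 < 1/2} = ENNReal.ofReal (1/2) := by
  have : {g : Fin 1 → ℝ | g 0 < 1/2} = {g | g 0 ∈ Set.Iio (1/2)} := by ext g; simp
  rw [this, theta1_val, vol01_Iio (by norm_num) (by norm_num)]

lemma vNeg (m : ℕ) (k : Fin m) : thetaM m {g | g k < 0} = 0 := by
  have hset : {g : Fin m → ℝ | g k < 0} =
      Set.pi Set.univ (fun k' => if k' = k then Set.Iio 0 else Set.univ) := by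
    ext g
    simp only [Set.mem_setOf_eq, Set.mem_pi, Set.mem_univ, forall_true_left]
    constructor
    · intro h k'
      by_cases hk : k' = k <;> simp [hk, h]
    · intro h
      have := h k
      simpa using this
  rw [hset, MeasureTheory.Measure.pi_pi]
  apply Finset.prod_eq_zero (Finset.mem_univ k)
  simp only [if_pos rfl, eq_self_iff_true, if_true]
  rw [Measure.restrict_apply measurableSet_Iio]
  have : Set.Iio (0:ℝ) ∩ Set.Icc 0 1 = ∅ := by
    ext y
    simp only [Set.mem_inter_iff, Set.mem_Iio, Set.mem_Icc, Set.mem_empty_iff_false, iff_false,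
      not_and]
    intro h h2
    linarith
  simp [this]

lemma badNull (N m : ℕ) : thMeasure N m {μ | ¬ ∀ (a : Fin N) (k : Fin m), 0 ≤ μ a k} = 0 := by
  apply measure_mono_null (t := ⋃ (a : Fin N) (k : Fin m),
    {μ : Fin N → Fin m → ℝ | ∀ x ∈ ({a} : Finset (Fin N)), μ x ∈ {g | g k < 0}})
  · intro μ hμ
    simp only [Set.mem_setOf_eq, not_forall, not_le] at hμ
    obtain ⟨a, k, hk⟩ := hμ
    simp only [Set.mem_iUnion]
    exact ⟨a, k, by simp [hk]⟩
  · apply measure_iUnion_null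
    intro a
    apply measure_iUnion_null
    intro k
    rw [prodEvent ({a} : Finset (Fin N)) (fun _ => {g | g k < 0})]
    simp [vNeg]

lemma succMod {N a : ℕ} (ha : a < N) :
    (a+1) % N = a+1 ∧ a+1 < N ∨ ((a+1) % N = 0 ∧ a+1 = N) := by
  rcases Nat.lt_or_ge (a+1) N with h|h
  · exact Or.inl ⟨Nat.mod_eq_of_lt h, h⟩
  · have h2 : a+1 = N := by omega
    exact Or.inr ⟨by simp [h2], h2⟩

section weights
variable {N : ℕ} {x y : Fin N}

lemma cycleW_nonneg : 0 ≤ cycleW N x y := by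
  unfold cycleW; split_ifs <;> norm_num

lemma cycleW_le_half : cycleW N x y ≤ 1/2 := by
  unfold cycleW; split_ifs <;> norm_num

lemma cycleW_adj (h : x.val = y.val + 1 ∨ y.val = x.val + 1) : cycleW N x y = 1/2 := by
  unfold cycleW
  apply if_pos
  rcases h with h | h
  · exact Or.inr (by rw [← h]; exact Nat.mod_eq_of_lt x.isLt)
  · exact Or.inl (by rw [← h]; exact Nat.mod_eq_of_lt y.isLt)

lemma cycleW_adj_wrapA (hx : x.val = N - 1) (hy : y.val = 0) (hN : 1 ≤ N) :
    cycleW N x y = 1/2 := by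
  unfold cycleW
  apply if_pos
  left
  rw [hx, hy]
  have : N - 1 + 1 = N := by omega
  rw [this, Nat.mod_self]

lemma cycleW_adj_wrapB (hx : x.val = 0) (hy : y.val = N - 1) (hN : 1 ≤ N) :
    cycleW N x y = 1/2 := by
  unfold cycleW
  apply if_pos
  right
  rw [hx, hy]
  have : N - 1 + 1 = N := by omega
  rw [this, Nat.mod_self]

lemma cycleW_support (hx1 : 1 ≤ x.val) (hx2 : x.val ≤ N - 2) (h : cycleW N x y ≠ 0) :
    y.val + 1 = x.val ∨ y.val = x.val + 1 := by
  unfold cycleW at h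
  split_ifs at h with hc
  · rcases succMod x.isLt with ⟨e1, e2⟩ | ⟨e1, e2⟩ <;>
      rcases succMod y.isLt with ⟨f1, f2⟩ | ⟨f1, f2⟩ <;>
      rcases hc with hc | hc <;> omega
  · exact absurd rfl h

lemma cycleW_support0 (hx : x.val = 0) (hN : 2 ≤ N) (h : cycleW N x y ≠ 0) :
    y.val = 1 ∨ y.val = N - 1 := by
  unfold cycleW at h
  split_ifs at h with hc
  · rcases succMod x.isLt with ⟨e1, e2⟩ | ⟨e1, e2⟩ <;>
      rcases succMod y.isLt with ⟨f1, f2⟩ | ⟨f1, f2⟩ <;>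
      rcases hc with hc | hc <;> omega
  · exact absurd rfl h

lemma cycleW_supportTop (hx : x.val = N - 1) (hN : 2 ≤ N) (h : cycleW N x y ≠ 0) :
    y.val = N - 2 ∨ y.val = 0 := by
  unfold cycleW at h
  split_ifs at h with hc
  · have hxl := x.isLt
    rcases succMod x.isLt with ⟨e1, e2⟩ | ⟨e1, e2⟩ <;>
      rcases succMod y.isLt with ⟨f1, f2⟩ | ⟨f1, f2⟩ <;>
      rcases hc with hc | hc <;> omega
  · exact absurd rfl h

lemma pathW_nonneg : 0 ≤ pathW N x y := by
  unfold pathW; split_ifs <;> norm_num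

lemma pathW_le_half (hx1 : x.val ≠ 0) (hx2 : x.val ≠ N - 1) : pathW N x y ≤ 1/2 := by
  unfold pathW
  split_ifs with h1 h2
  · exact absurd h2 (by simp [hx1, hx2])
  · norm_num
  · norm_num

lemma pathW_adj_int (hx1 : x.val ≠ 0) (hx2 : x.val ≠ N - 1)
    (h : x.val = y.val + 1 ∨ y.val = x.val + 1) : pathW N x y = 1/2 := by
  unfold pathW
  rw [if_pos (h.symm.imp (fun a => a.symm ▸ rfl) (fun a => a.symm ▸ rfl))]
  · rw [if_neg (by simp [hx1, hx2])]
  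
lemma pathW_end0 (hx : x.val = 0) (hy : y.val = 1) : pathW N x y = 1 := by
  unfold pathW
  rw [if_pos (Or.inl (by omega)), if_pos (Or.inl hx)]

lemma pathW_endTop (hx : x.val = N - 1) (hy : y.val = N - 2) (hN : 2 ≤ N) :
    pathW N x y = 1 := by
  unfold pathW
  rw [if_pos (Or.inr (by omega)), if_pos (Or.inr hx)]

lemma pathW_support (h : pathW N x y ≠ 0) : y.val = x.val + 1 ∨ x.val = y.val + 1 := by
  unfold pathW at h
  split_ifs at h with hc hc2
  · exact hc
  · exact hc
  · exact absurd rfl h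

lemma permW2_nonneg : 0 ≤ permW2 N x y := by
  unfold permW2; split_ifs <;> norm_num

lemma permW2_le_half (hx : x.val ≤ N - 3) (hN : 3 ≤ N) : permW2 N x y ≤ 1/2 := by
  unfold permW2
  split_ifs with h1 h2
  · exact absurd h2 (by omega)
  · norm_num
  · norm_num

lemma permW2_adj_int (hx : x.val ≤ N - 3) (hN : 7 ≤ N)
    (h : x.val = y.val + 1 ∨ y.val = x.val + 1) : permW2 N x y = 1/2 := by
  have hyl := y.isLt
  unfold permW2
  rw [if_pos, if_neg (by omega)]
  constructor
  · rcases h with h | h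
    · exact Or.inr (by rw [← h]; exact Nat.mod_eq_of_lt x.isLt)
    · exact Or.inl (by rw [← h]; exact Nat.mod_eq_of_lt y.isLt)
  · omega

lemma permW2_top (hx : x.val = N - 1) (hy : y.val = 0) (hN : 7 ≤ N) : permW2 N x y = 1 := by
  unfold permW2
  rw [if_pos, if_pos (Or.inr hx)]
  constructor
  · left
    rw [hx, hy]
    have : N - 1 + 1 = N := by omega
    rw [this, Nat.mod_self]
  · omega

lemma permW2_N2 (hx : x.val = N - 2) (hy : y.val = N - 3) (hN : 7 ≤ N) : permW2 N x y = 1 := by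
  unfold permW2
  rw [if_pos, if_pos (Or.inl hx)]
  constructor
  · right
    rw [hx, hy]
    have : N - 3 + 1 = N - 2 := by omega
    rw [this]
    exact Nat.mod_eq_of_lt (by omega)
  · omega

lemma permW2_0_top (hx : x.val = 0) (hy : y.val = N - 1) (hN : 7 ≤ N) :
    permW2 N x y = 1/2 := by
  unfold permW2
  rw [if_pos, if_neg (by omega)]
  constructor
  · right
    rw [hx, hy]
    have : N - 1 + 1 = N := by omega
    rw [this, Nat.mod_self]
  · omega

lemma permW2_support_int (hx1 : 1 ≤ x.val) (hx2 : x.val ≤ N - 3) (hN : 7 ≤ N)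
    (h : permW2 N x y ≠ 0) : y.val + 1 = x.val ∨ y.val = x.val + 1 := by
  unfold permW2 at h
  split_ifs at h with hc hc2 <;> [skip; skip; exact absurd rfl h] <;>
  · obtain ⟨hc, -⟩ := hc
    rcases succMod x.isLt with ⟨e1, e2⟩ | ⟨e1, e2⟩ <;>
      rcases succMod y.isLt with ⟨f1, f2⟩ | ⟨f1, f2⟩ <;>
      rcases hc with hc | hc <;> omega

lemma permW2_support_N2 (hx : x.val = N - 2) (hN : 7 ≤ N) (h : permW2 N x y ≠ 0) :
    y.val = N - 3 := by
  unfold permW2 at h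
  split_ifs at h with hc hc2 <;> [skip; skip; exact absurd rfl h] <;>
  · obtain ⟨hc, hc3⟩ := hc
    have hxl := x.isLt
    rcases succMod x.isLt with ⟨e1, e2⟩ | ⟨e1, e2⟩ <;>
      rcases succMod y.isLt with ⟨f1, f2⟩ | ⟨f1, f2⟩ <;>
      rcases hc with hc | hc <;> omega

end weights

section helpers
variable {n m : ℕ} {w : Fin m → Fin n → Fin n → ℝ} {u : Fin n → Protocol}
  {μ : Fin n → Fin m → ℝ} {a : Fin n} {A : Finset (Fin n)}

lemma sum_ge_of_mem {g : Fin n → ℝ} (hg : ∀ b, 0 ≤ g b) {p : Fin n} (hp : p ∈ A) :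
    g p ≤ ∑ b ∈ A, g b := Finset.single_le_sum (fun b _ => hg b) hp

lemma actPred_of_forall (k0 : Fin m) (h : ∀ k, μ a k < ∑ b ∈ A, w k a b) :
    actPred w u μ a A := by
  cases hu : u a
  · exact Or.inl ⟨hu, ⟨k0, h k0⟩⟩
  · exact Or.inr ⟨hu, h⟩

lemma actPred_or {k : Fin m} (h : μ a k < ∑ b ∈ A, w k a b) :
    actPred w (fun _ => Protocol.OR) μ a A := Or.inl ⟨rfl, k, h⟩

lemma not_actPred_forall (h : ∀ k, ¬ μ a k < ∑ b ∈ A, w k a b) (k0 : Fin m) :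
    ¬ actPred w u μ a A := by
  rintro (⟨-, k, hk⟩ | ⟨-, h2⟩)
  · exact h k hk
  · exact h k0 (h2 k0)

lemma not_actPred_AND {k0 : Fin m} (hk0 : ¬ μ a k0 < ∑ b ∈ A, w k0 a b) :
    ¬ actPred w (fun _ => Protocol.AND) μ a A := by
  rintro (⟨habs, -⟩ | ⟨-, h2⟩)
  · exact Protocol.noConfusion habs
  · exact hk0 (h2 k0)

end helpers

/-- The straight chain from `j` towards `i` (not passing through the wrap). -/
def chainNode {N : ℕ} (i j : Fin N) (r : ℕ) : Fin N :=
  ⟨if j.val ≤ i.val then min (j.val + r) (N - 1) else j.val - r, by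
    have h1 := j.isLt; have h2 := i.isLt; split <;> omega⟩

lemma chainNode_val {N : ℕ} {i j : Fin N} {r : ℕ} (hr : r ≤ Nat.dist i.val j.val) :
    (chainNode i j r).val = if j.val ≤ i.val then j.val + r else j.val - r := by
  have h1 := j.isLt; have h2 := i.isLt
  unfold chainNode
  simp only []
  rcases le_or_gt j.val i.val with h | h
  · rw [if_pos h, if_pos h]
    have : Nat.dist i.val j.val = i.val - j.val := by
      rw [Nat.dist_comm]; exact Nat.dist_eq_sub_of_le h
    omega
  · rw [if_neg (by omega), if_neg (by omega)]

lemma chainNode_zero {N : ℕ} (i j : Fin N) : chainNode i j 0 = j := by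
  apply Fin.ext
  rw [chainNode_val (Nat.zero_le _)]
  split <;> omega

lemma chainNode_last {N : ℕ} (i j : Fin N) :
    chainNode i j (Nat.dist i.val j.val) = i := by
  apply Fin.ext
  rw [chainNode_val le_rfl]
  rcases le_or_gt j.val i.val with h | h
  · rw [if_pos h]
    have : Nat.dist i.val j.val = i.val - j.val := by
      rw [Nat.dist_comm]; exact Nat.dist_eq_sub_of_le h
    omega
  · rw [if_neg (by omega)]
    have : Nat.dist i.val j.val = j.val - i.val := Nat.dist_eq_sub_of_le (by omega)
    omega

lemma chainNode_succ_val {N : ℕ} {i j : Fin N} {r : ℕ}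
    (hr : r + 1 ≤ Nat.dist i.val j.val) :
    (if j.val ≤ i.val
      then (chainNode i j (r+1)).val = (chainNode i j r).val + 1
      else (chainNode i j r).val = (chainNode i j (r+1)).val + 1) := by
  have h1 := j.isLt; have h2 := i.isLt
  rw [chainNode_val hr, chainNode_val (by omega)]
  rcases le_or_gt j.val i.val with h | h
  · simp only [if_pos h]; omega
  · have : Nat.dist i.val j.val = j.val - i.val := Nat.dist_eq_sub_of_le (by omega)
    simp only [if_neg (by omega : ¬ j.val ≤ i.val)]
    omega

lemma chainNode_range {N : ℕ} {i j : Fin N} {r : ℕ} (hr : r ≤ Nat.dist i.val j.val)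
    (hj1 : 1 ≤ j.val) (hj2 : j.val ≤ N - 3) (hi1 : 1 ≤ i.val) (hi2 : i.val ≤ N - 3) :
    1 ≤ (chainNode i j r).val ∧ (chainNode i j r).val ≤ N - 3 := by
  rw [chainNode_val hr]
  rcases le_or_gt j.val i.val with h | h
  · have : Nat.dist i.val j.val = i.val - j.val := by
      rw [Nat.dist_comm]; exact Nat.dist_eq_sub_of_le h
    rw [if_pos h]; omega
  · have : Nat.dist i.val j.val = j.val - i.val := Nat.dist_eq_sub_of_le (by omega)
    rw [if_neg (by omega)]; omega

/-- Lower bound event containment for the monoplex cycle. -/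
lemma cycle_low {N : ℕ} (hN : 7 ≤ N) (u : Fin N → Protocol) (i j : Fin N)
    (hi1 : 1 ≤ i.val) (hi2 : i.val ≤ N - 3) (hj1 : 1 ≤ j.val) (hj2 : j.val ≤ N - 3)
    (μ : Fin N → Fin 1 → ℝ)
    (hμ : ∀ r ∈ Finset.Icc 1 (Nat.dist i.val j.val), μ (chainNode i j r) 0 < 1/2) :
    i ∈ ltmSS (fun _ : Fin 1 => cycleW N) u {j} μ := by
  have hdn : Nat.dist i.val j.val ≤ N := by
    have h1 := i.isLt; have h2 := j.isLt
    simp [Nat.dist]; omega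
  rw [← chainNode_last i j]
  apply chain_reach (chainNode i j) (Nat.dist i.val j.val) hdn
    (by rw [chainNode_zero]; exact Finset.mem_singleton_self j)
  intro r hr A hA
  apply actPred_of_forall 0
  intro k
  have hadj : (chainNode i j (r+1)).val = (chainNode i j r).val + 1 ∨
      (chainNode i j r).val = (chainNode i j (r+1)).val + 1 := by
    have := chainNode_succ_val (i := i) (j := j) (r := r) (by omega)
    split at this
    · exact Or.inl this
    · exact Or.inr this
  have hw : cycleW N (chainNode i j (r+1)) (chainNode i j r) = 1/2 := cycleW_adj hadj
  have hsum : (1:ℝ)/2 ≤ ∑ b ∈ A, cycleW N (chainNode i j (r+1)) b := by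
    rw [← hw]
    exact sum_ge_of_mem (g := fun b => cycleW N (chainNode i j (r+1)) b)
      (fun b => cycleW_nonneg) hA
  have hμ' := hμ (r+1) (Finset.mem_Icc.mpr ⟨by omega, by omega⟩)
  calc μ (chainNode i j (r+1)) k = μ (chainNode i j (r+1)) 0 := by
        congr 1; exact Subsingleton.elim _ _
  _ < 1/2 := hμ'
  _ ≤ _ := hsum

/-- Blocking on the cycle with an interval barrier `[x, y]`. -/
lemma cycBlock {N : ℕ} (hN : 7 ≤ N) (u : Fin N → Protocol) (j : Fin N)
    (μ : Fin N → Fin 1 → ℝ) (hpos : ∀ a k, 0 ≤ μ a k)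
    (x y : ℕ) (hxy : x < y) (hy : y ≤ N - 1)
    (hj : j.val < x ∨ y < j.val)
    (hμx : ¬ μ ⟨x, by omega⟩ 0 < 1/2) (hμy : ¬ μ ⟨y, by omega⟩ 0 < 1/2) :
    ∀ a : Fin N, x ≤ a.val → a.val ≤ y → a ∉ ltmSS (fun _ : Fin 1 => cycleW N) u {j} μ := by
  set D : Finset (Fin N) := Finset.univ.filter (fun a => x ≤ a.val ∧ a.val ≤ y) with hD
  have hmem : ∀ a : Fin N, a ∈ D ↔ (x ≤ a.val ∧ a.val ≤ y) := by
    intro a; simp [hD]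
  intro a hax hay hmem_ss
  refine blocking (D := D) ?_ ?_ a hmem_ss ((hmem a).mpr ⟨hax, hay⟩)
  · intro b hb A hA
    rw [hmem] at hb
    apply not_actPred_forall ?_ 0
    intro k
    have hk : k = 0 := Subsingleton.elim _ _
    subst hk
    -- three cases: b.val = x, b.val = y, interior
    have hjlt := j.isLt
    rcases eq_or_lt_of_le hb.1 with hbx | hbx
    · -- b = x : sum ≤ 1/2 and μ b 0 ≥ 1/2
      have hbeq : b = ⟨x, by omega⟩ := Fin.ext hbx.symm
      have hsum : ∑ c ∈ A, cycleW N b c ≤ 1/2 := by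
        rcases Nat.eq_zero_or_pos x with hx0 | hx0
        · apply sum_le_single_nbr (⟨N - 1, by omega⟩ : Fin N) (by norm_num)
          intro c hc
          by_cases hw : cycleW N b c = 0
          · rw [hw]; split <;> norm_num
          · have hsup := cycleW_support0 (x := b) (y := c) (by omega) (by omega) hw
            rcases hsup with hs | hs
            · exact absurd ((hmem c).mpr ⟨by omega, by omega⟩) (hA c hc)
            · have : c = (⟨N - 1, by omega⟩ : Fin N) := Fin.ext (show c.val = N - 1 by omega)
              rw [if_pos this]
              exact cycleW_le_half
        · apply sum_le_single_nbr (⟨x - 1, by omega⟩ : Fin N) (by norm_num)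
          intro c hc
          by_cases hw : cycleW N b c = 0
          · rw [hw]; split <;> norm_num
          · have hsup := cycleW_support (x := b) (y := c) (by omega) (by omega) hw
            rcases hsup with hs | hs
            · have : c = (⟨x - 1, by omega⟩ : Fin N) := Fin.ext (show c.val = x - 1 by omega)
              rw [if_pos this]
              exact cycleW_le_half
            · exact absurd ((hmem c).mpr ⟨by omega, by omega⟩) (hA c hc)
      rw [hbeq] at hsum ⊢
      intro habs
      exact hμx (lt_of_lt_of_le habs hsum)
    · rcases eq_or_lt_of_le hb.2 with hby | hby
      · -- b = y
        have hbeq : b = ⟨y, by omega⟩ := Fin.ext hby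
        have hsum : ∑ c ∈ A, cycleW N b c ≤ 1/2 := by
          rcases Nat.lt_or_ge y (N-1) with hytop | hytop
          · apply sum_le_single_nbr (⟨y + 1, by omega⟩ : Fin N) (by norm_num)
            intro c hc
            by_cases hw : cycleW N b c = 0
            · rw [hw]; split <;> norm_num
            · have hsup := cycleW_support (x := b) (y := c) (by omega) (by omega) hw
              rcases hsup with hs | hs
              · exact absurd ((hmem c).mpr ⟨by omega, by omega⟩) (hA c hc)
              · have : c = (⟨y + 1, by omega⟩ : Fin N) := Fin.ext (show c.val = y + 1 by omega)
                rw [if_pos this]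
                exact cycleW_le_half
          · have hyt : y = N - 1 := by omega
            apply sum_le_single_nbr (⟨0, by omega⟩ : Fin N) (by norm_num)
            intro c hc
            by_cases hw : cycleW N b c = 0
            · rw [hw]; split <;> norm_num
            · have hsup := cycleW_supportTop (x := b) (y := c) (by omega) (by omega) hw
              rcases hsup with hs | hs
              · exact absurd ((hmem c).mpr ⟨by omega, by omega⟩) (hA c hc)
              · have : c = (⟨0, by omega⟩ : Fin N) := Fin.ext (show c.val = 0 by omega)
                rw [if_pos this]
                exact cycleW_le_half
        rw [hbeq] at hsum ⊢
        intro habs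
        exact hμy (lt_of_lt_of_le habs hsum)
      · -- interior
        have hsum : ∑ c ∈ A, cycleW N b c = 0 := by
          apply Finset.sum_eq_zero
          intro c hc
          by_contra hw
          have hsup := cycleW_support (x := b) (y := c) (by omega) (by omega) hw
          rcases hsup with hs | hs <;>
            exact absurd ((hmem c).mpr ⟨by omega, by omega⟩) (hA c hc)
        rw [hsum]
        exact not_lt.mpr (hpos b 0)
  · intro b hb
    rw [Finset.mem_singleton] at hb
    subst hb
    rw [hmem]
    omega

/-- Blocking on the cycle with a two-sided barrier `[0, p] ∪ [q, N-1]`. -/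
lemma cycBlock2 {N : ℕ} (hN : 7 ≤ N) (u : Fin N → Protocol) (j : Fin N)
    (μ : Fin N → Fin 1 → ℝ) (hpos : ∀ a k, 0 ≤ μ a k)
    (p q : ℕ) (hpq : p + 2 ≤ q) (hq : q ≤ N - 1) (hjp : p < j.val) (hjq : j.val < q)
    (hμp : ¬ μ ⟨p, by omega⟩ 0 < 1/2) (hμq : ¬ μ ⟨q, by omega⟩ 0 < 1/2) :
    ∀ a : Fin N, (a.val ≤ p ∨ q ≤ a.val) → a ∉ ltmSS (fun _ : Fin 1 => cycleW N) u {j} μ := by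
  set D : Finset (Fin N) := Finset.univ.filter (fun a => a.val ≤ p ∨ q ≤ a.val) with hD
  have hmem : ∀ a : Fin N, a ∈ D ↔ (a.val ≤ p ∨ q ≤ a.val) := by
    intro a; simp [hD]
  intro a ha hmem_ss
  refine blocking (D := D) ?_ ?_ a hmem_ss ((hmem a).mpr ha)
  · intro b hb A hA
    rw [hmem] at hb
    apply not_actPred_forall ?_ 0
    intro k
    have hk : k = 0 := Subsingleton.elim _ _
    subst hk
    have hbN := b.isLt
    by_cases hbp : b.val = p
    · -- b = p
      have hbeq : b = ⟨p, by omega⟩ := Fin.ext hbp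
      have hsum : ∑ c ∈ A, cycleW N b c ≤ 1/2 := by
        rcases Nat.eq_zero_or_pos p with hp0 | hp0
        · apply sum_le_single_nbr (⟨1, by omega⟩ : Fin N) (by norm_num)
          intro c hc
          by_cases hw : cycleW N b c = 0
          · rw [hw]; split <;> norm_num
          · have hsup := cycleW_support0 (x := b) (y := c) (by omega) (by omega) hw
            rcases hsup with hs | hs
            · have : c = (⟨1, by omega⟩ : Fin N) := Fin.ext (show c.val = 1 by omega)
              rw [if_pos this]; exact cycleW_le_half
            · exact absurd ((hmem c).mpr (by omega)) (hA c hc)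
        · apply sum_le_single_nbr (⟨p + 1, by omega⟩ : Fin N) (by norm_num)
          intro c hc
          by_cases hw : cycleW N b c = 0
          · rw [hw]; split <;> norm_num
          · have hsup := cycleW_support (x := b) (y := c) (by omega) (by omega) hw
            rcases hsup with hs | hs
            · exact absurd ((hmem c).mpr (by omega)) (hA c hc)
            · have : c = (⟨p + 1, by omega⟩ : Fin N) := Fin.ext (show c.val = p + 1 by omega)
              rw [if_pos this]; exact cycleW_le_half
      rw [hbeq] at hsum ⊢
      intro habs
      exact hμp (lt_of_lt_of_le habs hsum)
    · by_cases hbq : b.val = q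
      · -- b = q
        have hbeq : b = ⟨q, by omega⟩ := Fin.ext hbq
        have hsum : ∑ c ∈ A, cycleW N b c ≤ 1/2 := by
          rcases Nat.lt_or_ge q (N-1) with hqt | hqt
          · apply sum_le_single_nbr (⟨q - 1, by omega⟩ : Fin N) (by norm_num)
            intro c hc
            by_cases hw : cycleW N b c = 0
            · rw [hw]; split <;> norm_num
            · have hsup := cycleW_support (x := b) (y := c) (by omega) (by omega) hw
              rcases hsup with hs | hs
              · have : c = (⟨q - 1, by omega⟩ : Fin N) := Fin.ext (show c.val = q - 1 by omega)
                rw [if_pos this]; exact cycleW_le_half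
              · exact absurd ((hmem c).mpr (by omega)) (hA c hc)
          · apply sum_le_single_nbr (⟨q - 1, by omega⟩ : Fin N) (by norm_num)
            intro c hc
            by_cases hw : cycleW N b c = 0
            · rw [hw]; split <;> norm_num
            · have hsup := cycleW_supportTop (x := b) (y := c) (by omega) (by omega) hw
              rcases hsup with hs | hs
              · have : c = (⟨q - 1, by omega⟩ : Fin N) := Fin.ext (show c.val = q - 1 by omega)
                rw [if_pos this]; exact cycleW_le_half
              · exact absurd ((hmem c).mpr (by omega)) (hA c hc)
        rw [hbeq] at hsum ⊢
        intro habs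
        exact hμq (lt_of_lt_of_le habs hsum)
      · -- interior
        have hsum : ∑ c ∈ A, cycleW N b c = 0 := by
          apply Finset.sum_eq_zero
          intro c hc
          by_contra hw
          rcases hb with hb | hb
          · -- b.val < p
            rcases Nat.eq_zero_or_pos b.val with hb0 | hb0
            · have hsup := cycleW_support0 (x := b) (y := c) (by omega) (by omega) hw
              rcases hsup with hs | hs <;>
                exact absurd ((hmem c).mpr (by omega)) (hA c hc)
            · have hsup := cycleW_support (x := b) (y := c) (by omega) (by omega) hw
              rcases hsup with hs | hs <;>
                exact absurd ((hmem c).mpr (by omega)) (hA c hc)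
          · -- b.val > q
            rcases Nat.lt_or_ge b.val (N-1) with hbt | hbt
            · have hsup := cycleW_support (x := b) (y := c) (by omega) (by omega) hw
              rcases hsup with hs | hs <;>
                exact absurd ((hmem c).mpr (by omega)) (hA c hc)
            · have hsup := cycleW_supportTop (x := b) (y := c) (by omega) (by omega) hw
              rcases hsup with hs | hs <;>
                exact absurd ((hmem c).mpr (by omega)) (hA c hc)
        rw [hsum]
        exact not_lt.mpr (hpos b 0)
  · intro b hb
    rw [Finset.mem_singleton] at hb
    subst hb
    rw [hmem]
    omega

lemma wP_zero (N : ℕ) : (fun k : Fin 2 => if k = 0 then pathW N else permW2 N) 0 = pathW N := by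
  simp

lemma wP_one (N : ℕ) : (fun k : Fin 2 => if k = 0 then pathW N else permW2 N) 1 = permW2 N := by
  norm_num

/-- AND-blocking on the permutation duplex with barrier `[c, N-2]`. -/
lemma andBlock1 {N : ℕ} (hN : 7 ≤ N) (j : Fin N)
    (μ : Fin N → Fin 2 → ℝ) (hpos : ∀ a k, 0 ≤ μ a k)
    (c : ℕ) (hc1 : 2 ≤ c) (hc2 : c ≤ N - 4) (hjc : j.val < c)
    (hfail : ¬ μ ⟨c, by omega⟩ 0 < 1/2 ∨ ¬ μ ⟨c, by omega⟩ 1 < 1/2) :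
    ∀ a : Fin N, c ≤ a.val → a.val ≤ N - 2 →
      a ∉ ltmSS (fun k : Fin 2 => if k = 0 then pathW N else permW2 N)
        (fun _ => Protocol.AND) {j} μ := by
  set D : Finset (Fin N) := Finset.univ.filter (fun a => c ≤ a.val ∧ a.val ≤ N - 2) with hD
  have hmem : ∀ a : Fin N, a ∈ D ↔ (c ≤ a.val ∧ a.val ≤ N - 2) := by
    intro a; simp [hD]
  intro a ha1 ha2 hmem_ss
  refine blocking (D := D) ?_ ?_ a hmem_ss ((hmem a).mpr ⟨ha1, ha2⟩)
  · intro b hb A hA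
    rw [hmem] at hb
    have hbN := b.isLt
    rcases eq_or_lt_of_le hb.1 with hbc | hbc
    · -- b = c : both sums ≤ 1/2, and one threshold is ≥ 1/2
      have hbeq : b = ⟨c, by omega⟩ := Fin.ext hbc.symm
      have hsum0 : ∑ x ∈ A, pathW N b x ≤ 1/2 := by
        apply sum_le_single_nbr (⟨c - 1, by omega⟩ : Fin N) (by norm_num)
        intro x hx
        by_cases hw : pathW N b x = 0
        · rw [hw]; split <;> norm_num
        · have hsup := pathW_support hw
          rcases hsup with hs | hs
          · exact absurd ((hmem x).mpr (by omega)) (hA x hx)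
          · have : x = (⟨c - 1, by omega⟩ : Fin N) := Fin.ext (show x.val = c - 1 by omega)
            rw [if_pos this]
            exact pathW_le_half (by omega) (by omega)
      have hsum1 : ∑ x ∈ A, permW2 N b x ≤ 1/2 := by
        apply sum_le_single_nbr (⟨c - 1, by omega⟩ : Fin N) (by norm_num)
        intro x hx
        by_cases hw : permW2 N b x = 0
        · rw [hw]; split <;> norm_num
        · have hsup := permW2_support_int (x := b) (y := x) (by omega) (by omega) hN hw
          rcases hsup with hs | hs
          · have : x = (⟨c - 1, by omega⟩ : Fin N) := Fin.ext (show x.val = c - 1 by omega)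
            rw [if_pos this]
            exact permW2_le_half (by omega) (by omega)
          · exact absurd ((hmem x).mpr (by omega)) (hA x hx)
      rcases hfail with hf | hf
      · apply not_actPred_AND (k0 := 0)
        rw [show (if (0:Fin 2) = 0 then pathW N else permW2 N) = pathW N from if_pos rfl]
        rw [hbeq]
        rw [hbeq] at hsum0
        intro habs
        exact hf (lt_of_lt_of_le habs hsum0)
      · apply not_actPred_AND (k0 := 1)
        rw [show (if (1:Fin 2) = 0 then pathW N else permW2 N) = permW2 N from if_neg (by decide)]
        rw [hbeq]
        rw [hbeq] at hsum1
        intro habs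
        exact hf (lt_of_lt_of_le habs hsum1)
    · rcases Nat.lt_or_ge b.val (N - 2) with hbt | hbt
      · -- c < b < N-2 : layer-1 sum is 0
        apply not_actPred_AND (k0 := 0)
        rw [show (if (0:Fin 2) = 0 then pathW N else permW2 N) = pathW N from if_pos rfl]
        have hsum : ∑ x ∈ A, pathW N b x = 0 := by
          apply Finset.sum_eq_zero
          intro x hx
          by_contra hw
          have hsup := pathW_support hw
          rcases hsup with hs | hs <;>
            exact absurd ((hmem x).mpr (by omega)) (hA x hx)
        rw [hsum]
        exact not_lt.mpr (hpos b 0)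
      · -- b = N-2 : layer-2 sum is 0
        apply not_actPred_AND (k0 := 1)
        rw [show (if (1:Fin 2) = 0 then pathW N else permW2 N) = permW2 N from if_neg (by decide)]
        have hsum : ∑ x ∈ A, permW2 N b x = 0 := by
          apply Finset.sum_eq_zero
          intro x hx
          by_contra hw
          have hsup := permW2_support_N2 (x := b) (y := x) (by omega) hN hw
          exact absurd ((hmem x).mpr (by omega)) (hA x hx)
        rw [hsum]
        exact not_lt.mpr (hpos b 1)
  · intro b hb
    rw [Finset.mem_singleton] at hb
    subst hb
    rw [hmem]
    omega

/-- AND-blocking on the permutation duplex with barrier `[0, c]`. -/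
lemma andBlock2 {N : ℕ} (hN : 7 ≤ N) (j : Fin N)
    (μ : Fin N → Fin 2 → ℝ) (hpos : ∀ a k, 0 ≤ μ a k)
    (c : ℕ) (hc1 : 2 ≤ c) (hc2 : c ≤ N - 4) (hjc : c < j.val)
    (hfail : ¬ μ ⟨c, by omega⟩ 0 < 1/2 ∨ ¬ μ ⟨c, by omega⟩ 1 < 1/2) :
    ∀ a : Fin N, a.val ≤ c →
      a ∉ ltmSS (fun k : Fin 2 => if k = 0 then pathW N else permW2 N)
        (fun _ => Protocol.AND) {j} μ := by
  set D : Finset (Fin N) := Finset.univ.filter (fun a => a.val ≤ c) with hD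
  have hmem : ∀ a : Fin N, a ∈ D ↔ a.val ≤ c := by
    intro a; simp [hD]
  intro a ha1 hmem_ss
  refine blocking (D := D) ?_ ?_ a hmem_ss ((hmem a).mpr ha1)
  · intro b hb A hA
    rw [hmem] at hb
    have hbN := b.isLt
    rcases eq_or_lt_of_le hb with hbc | hbc
    · -- b = c
      have hbeq : b = ⟨c, by omega⟩ := Fin.ext hbc
      have hsum0 : ∑ x ∈ A, pathW N b x ≤ 1/2 := by
        apply sum_le_single_nbr (⟨c + 1, by omega⟩ : Fin N) (by norm_num)
        intro x hx
        by_cases hw : pathW N b x = 0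
        · rw [hw]; split <;> norm_num
        · have hsup := pathW_support hw
          rcases hsup with hs | hs
          · have : x = (⟨c + 1, by omega⟩ : Fin N) := Fin.ext (show x.val = c + 1 by omega)
            rw [if_pos this]
            exact pathW_le_half (by omega) (by omega)
          · exact absurd ((hmem x).mpr (by omega)) (hA x hx)
      have hsum1 : ∑ x ∈ A, permW2 N b x ≤ 1/2 := by
        apply sum_le_single_nbr (⟨c + 1, by omega⟩ : Fin N) (by norm_num)
        intro x hx
        by_cases hw : permW2 N b x = 0
        · rw [hw]; split <;> norm_num
        · have hsup := permW2_support_int (x := b) (y := x) (by omega) (by omega) hN hw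
          rcases hsup with hs | hs
          · exact absurd ((hmem x).mpr (by omega)) (hA x hx)
          · have : x = (⟨c + 1, by omega⟩ : Fin N) := Fin.ext (show x.val = c + 1 by omega)
            rw [if_pos this]
            exact permW2_le_half (by omega) (by omega)
      rcases hfail with hf | hf
      · apply not_actPred_AND (k0 := 0)
        rw [show (if (0:Fin 2) = 0 then pathW N else permW2 N) = pathW N from if_pos rfl]
        rw [hbeq]
        rw [hbeq] at hsum0
        intro habs
        exact hf (lt_of_lt_of_le habs hsum0)
      · apply not_actPred_AND (k0 := 1)
        rw [show (if (1:Fin 2) = 0 then pathW N else permW2 N) = permW2 N from if_neg (by decide)]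
        rw [hbeq]
        rw [hbeq] at hsum1
        intro habs
        exact hf (lt_of_lt_of_le habs hsum1)
    · -- b < c : layer-1 sum is 0
      apply not_actPred_AND (k0 := 0)
      rw [show (if (0:Fin 2) = 0 then pathW N else permW2 N) = pathW N from if_pos rfl]
      have hsum : ∑ x ∈ A, pathW N b x = 0 := by
        apply Finset.sum_eq_zero
        intro x hx
        by_contra hw
        have hsup := pathW_support hw
        rcases hsup with hs | hs <;>
          exact absurd ((hmem x).mpr (by omega)) (hA x hx)
      rw [hsum]
      exact not_lt.mpr (hpos b 0)
  · intro b hb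
    rw [Finset.mem_singleton] at hb
    subst hb
    rw [hmem]
    omega

section orchains
variable {N : ℕ}

lemma or_step_path {μ : Fin N → Fin 2 → ℝ} {A : Finset (Fin N)} {x p : Fin N}
    (hp : p ∈ A) {t : ℝ} (hw : t ≤ pathW N x p) (hμ : μ x 0 < t) :
    actPred (fun k : Fin 2 => if k = 0 then pathW N else permW2 N)
      (fun _ => Protocol.OR) μ x A := by
  apply actPred_or (k := 0)
  rw [show ((if (0:Fin 2) = 0 then pathW N else permW2 N)) = pathW N from if_pos rfl]
  exact lt_of_lt_of_le hμ (le_trans hw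
    (sum_ge_of_mem (g := fun b => pathW N x b) (fun b => pathW_nonneg) hp))

lemma or_step_perm {μ : Fin N → Fin 2 → ℝ} {A : Finset (Fin N)} {x p : Fin N}
    (hp : p ∈ A) {t : ℝ} (hw : t ≤ permW2 N x p) (hμ : μ x 1 < t) :
    actPred (fun k : Fin 2 => if k = 0 then pathW N else permW2 N)
      (fun _ => Protocol.OR) μ x A := by
  apply actPred_or (k := 1)
  rw [show ((if (1:Fin 2) = 0 then pathW N else permW2 N)) = permW2 N from if_neg (by decide)]
  exact lt_of_lt_of_le hμ (le_trans hw
    (sum_ge_of_mem (g := fun b => permW2 N x b) (fun b => permW2_nonneg) hp))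

/-- OR lower bound: the direct chain. -/
lemma or_cw_low (hN : 7 ≤ N) (i j : Fin N)
    (hi1 : 1 ≤ i.val) (hi2 : i.val ≤ N - 3) (hj1 : 1 ≤ j.val) (hj2 : j.val ≤ N - 3)
    (μ : Fin N → Fin 2 → ℝ)
    (hμ : ∀ r ∈ Finset.Icc 1 (Nat.dist i.val j.val),
      μ (chainNode i j r) 0 < 1/2 ∨ μ (chainNode i j r) 1 < 1/2) :
    i ∈ ltmSS (fun k : Fin 2 => if k = 0 then pathW N else permW2 N)
      (fun _ => Protocol.OR) {j} μ := by
  have hdn : Nat.dist i.val j.val ≤ N := by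
    have h1 := i.isLt; have h2 := j.isLt
    simp [Nat.dist]; omega
  rw [← chainNode_last i j]
  apply chain_reach (chainNode i j) (Nat.dist i.val j.val) hdn
    (by rw [chainNode_zero]; exact Finset.mem_singleton_self j)
  intro r hr A hA
  have hadj : (chainNode i j (r+1)).val = (chainNode i j r).val + 1 ∨
      (chainNode i j r).val = (chainNode i j (r+1)).val + 1 := by
    have := chainNode_succ_val (i := i) (j := j) (r := r) (by omega)
    split at this
    · exact Or.inl this
    · exact Or.inr this
  have hrange := chainNode_range (i := i) (j := j) (r := r+1) (by omega) hj1 hj2 hi1 hi2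
  have hadj' : (chainNode i j (r+1)).val = (chainNode i j r).val + 1 ∨
      (chainNode i j r).val = (chainNode i j (r+1)).val + 1 := hadj
  rcases hμ (r+1) (Finset.mem_Icc.mpr ⟨by omega, by omega⟩) with hc | hc
  · exact or_step_path hA
      (le_of_eq (pathW_adj_int (by omega) (by omega) hadj).symm) hc
  · exact or_step_perm hA
      (le_of_eq (permW2_adj_int (by omega) hN hadj).symm) hc

/-- The wrap-around chain from `j` going down through `0`, `N-1`, `N-2`, … -/
def ccwD (j : Fin N) (r : ℕ) : Fin N :=
  ⟨if r ≤ j.val then j.val - r else N - (r - j.val), by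
    have := j.isLt; split <;> omega⟩

lemma ccwD_val_le {j : Fin N} {r : ℕ} (h : r ≤ j.val) : (ccwD j r).val = j.val - r := by
  unfold ccwD; simp only []; rw [if_pos h]

lemma ccwD_val_gt {j : Fin N} {r : ℕ} (h : j.val < r) : (ccwD j r).val = N - (r - j.val) := by
  unfold ccwD; simp only []; rw [if_neg (by omega)]

/-- OR lower bound: the wrap-around chain, in the case `j < i`. -/
lemma or_ccw_low_gt (hN : 7 ≤ N) (i j : Fin N)
    (hj1 : 1 ≤ j.val) (hji : j.val < i.val) (hi2 : i.val ≤ N - 4)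
    (μ : Fin N → Fin 2 → ℝ)
    (hμA : ∀ a : Fin N, ((1 ≤ a.val ∧ a.val < j.val) ∨ (i.val ≤ a.val ∧ a.val ≤ N - 3)) →
      (μ a 0 < 1/2 ∨ μ a 1 < 1/2))
    (h0 : μ ⟨0, by omega⟩ 0 < 1)
    (hN1 : μ ⟨N-1, by omega⟩ 1 < 1)
    (hN2 : μ ⟨N-2, by omega⟩ 0 < 1/2) :
    i ∈ ltmSS (fun k : Fin 2 => if k = 0 then pathW N else permW2 N)
      (fun _ => Protocol.OR) {j} μ := by
  have hiN := i.isLt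
  set e : ℕ := N - (i.val - j.val) with he
  have hlast : ccwD j e = i := by
    apply Fin.ext
    rw [ccwD_val_gt (by omega)]
    omega
  rw [← hlast]
  apply chain_reach (ccwD j) e (by omega)
    (by
      have : ccwD j 0 = j := Fin.ext (by rw [ccwD_val_le (by omega)]; omega)
      rw [this]; exact Finset.mem_singleton_self j)
  intro r hr A hA
  by_cases hA1 : r + 1 < j.val
  · -- x.val = j - r - 1 ∈ [1, j-1]
    have hx : (ccwD j (r+1)).val = j.val - (r+1) := ccwD_val_le (by omega)
    have hp : (ccwD j r).val = j.val - r := ccwD_val_le (by omega)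
    rcases hμA (ccwD j (r+1)) (Or.inl (by omega)) with hc | hc
    · exact or_step_path hA
        (le_of_eq (pathW_adj_int (by omega) (by omega) (by omega)).symm) hc
    · exact or_step_perm hA
        (le_of_eq (permW2_adj_int (by omega) hN (by omega)).symm) hc
  · by_cases hA2 : r + 1 = j.val
    · -- x = 0, pred = 1, layer 1 weight 1
      have hx : (ccwD j (r+1)).val = 0 := by rw [ccwD_val_le (by omega)]; omega
      have hp : (ccwD j r).val = 1 := by rw [ccwD_val_le (by omega)]; omega
      refine or_step_path hA (le_of_eq (pathW_end0 hx hp).symm) ?_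
      have : ccwD j (r+1) = (⟨0, by omega⟩ : Fin N) := Fin.ext hx
      rw [this]
      exact h0
    · by_cases hA3 : r + 1 = j.val + 1
      · -- x = N-1, pred = 0, layer 2 weight 1
        have hx : (ccwD j (r+1)).val = N - 1 := by rw [ccwD_val_gt (by omega)]; omega
        have hp : (ccwD j r).val = 0 := by rw [ccwD_val_le (by omega)]; omega
        refine or_step_perm hA (le_of_eq (permW2_top hx hp hN).symm) ?_
        have : ccwD j (r+1) = (⟨N-1, by omega⟩ : Fin N) := Fin.ext hx
        rw [this]
        exact hN1
      · by_cases hA4 : r + 1 = j.val + 2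
        · -- x = N-2, pred = N-1, layer 1 weight 1/2
          have hx : (ccwD j (r+1)).val = N - 2 := by rw [ccwD_val_gt (by omega)]; omega
          have hp : (ccwD j r).val = N - 1 := by rw [ccwD_val_gt (by omega)]; omega
          refine or_step_path hA
            (le_of_eq (pathW_adj_int (by omega) (by omega) (by omega)).symm) ?_
          have : ccwD j (r+1) = (⟨N-2, by omega⟩ : Fin N) := Fin.ext hx
          rw [this]
          exact hN2
        · -- x = N - (r+1-j) ∈ [i, N-3]
          have hx : (ccwD j (r+1)).val = N - (r + 1 - j.val) := ccwD_val_gt (by omega)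
          have hp : (ccwD j r).val = N - (r - j.val) := ccwD_val_gt (by omega)
          have hxr : i.val ≤ (ccwD j (r+1)).val ∧ (ccwD j (r+1)).val ≤ N - 3 := by omega
          rcases hμA (ccwD j (r+1)) (Or.inr hxr) with hc | hc
          · exact or_step_path hA
              (le_of_eq (pathW_adj_int (by omega) (by omega) (by omega)).symm) hc
          · exact or_step_perm hA
              (le_of_eq (permW2_adj_int (by omega) hN (by omega)).symm) hc

/-- The wrap-around chain from `j` going up through `N-2`, `N-1`, `0`, … -/
def ccwU (j : Fin N) (r : ℕ) : Fin N :=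
  ⟨if j.val + r < N then j.val + r else min (j.val + r - N) (N - 1), by
    have := j.isLt; split <;> omega⟩

lemma ccwU_val_lt {j : Fin N} {r : ℕ} (h : j.val + r < N) : (ccwU j r).val = j.val + r := by
  unfold ccwU; simp only []; rw [if_pos h]

lemma ccwU_val_ge {j : Fin N} {r : ℕ} (h : N ≤ j.val + r) (h2 : j.val + r - N ≤ N - 1) :
    (ccwU j r).val = j.val + r - N := by
  unfold ccwU; simp only []; rw [if_neg (by omega)]; omega

/-- OR lower bound: the wrap-around chain, in the case `i < j`. -/
lemma or_ccw_low_lt (hN : 7 ≤ N) (i j : Fin N)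
    (hi1 : 1 ≤ i.val) (hij : i.val < j.val) (hj2 : j.val ≤ N - 3) (hi2 : i.val ≤ N - 4)
    (μ : Fin N → Fin 2 → ℝ)
    (hμA : ∀ a : Fin N, ((j.val < a.val ∧ a.val ≤ N - 3) ∨ (1 ≤ a.val ∧ a.val ≤ i.val)) →
      (μ a 0 < 1/2 ∨ μ a 1 < 1/2))
    (hB2 : μ ⟨N-2, by omega⟩ 1 < 1)
    (hB3 : μ ⟨N-1, by omega⟩ 0 < 1)
    (hB4 : μ ⟨0, by omega⟩ 1 < 1/2) :
    i ∈ ltmSS (fun k : Fin 2 => if k = 0 then pathW N else permW2 N)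
      (fun _ => Protocol.OR) {j} μ := by
  have hiN := i.isLt
  set e : ℕ := N - (j.val - i.val) with he
  have hlast : ccwU j e = i := by
    apply Fin.ext
    rw [ccwU_val_ge (by omega) (by omega)]
    omega
  rw [← hlast]
  apply chain_reach (ccwU j) e (by omega)
    (by
      have : ccwU j 0 = j := Fin.ext (by rw [ccwU_val_lt (by omega)]; omega)
      rw [this]; exact Finset.mem_singleton_self j)
  intro r hr A hA
  by_cases hB1' : j.val + r + 1 ≤ N - 3
  · -- x.val = j + r + 1 ∈ [j+1, N-3]
    have hx : (ccwU j (r+1)).val = j.val + (r+1) := ccwU_val_lt (by omega)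
    have hp : (ccwU j r).val = j.val + r := ccwU_val_lt (by omega)
    rcases hμA (ccwU j (r+1)) (Or.inl (by omega)) with hc | hc
    · exact or_step_path hA
        (le_of_eq (pathW_adj_int (by omega) (by omega) (by omega)).symm) hc
    · exact or_step_perm hA
        (le_of_eq (permW2_adj_int (by omega) hN (by omega)).symm) hc
  · by_cases hB2' : j.val + r + 1 = N - 2
    · -- x = N-2, pred = N-3, layer 2 weight 1
      have hx : (ccwU j (r+1)).val = N - 2 := by rw [ccwU_val_lt (by omega)]; omega
      have hp : (ccwU j r).val = N - 3 := by rw [ccwU_val_lt (by omega)]; omega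
      refine or_step_perm hA (le_of_eq (permW2_N2 hx hp hN).symm) ?_
      have : ccwU j (r+1) = (⟨N-2, by omega⟩ : Fin N) := Fin.ext hx
      rw [this]
      exact hB2
    · by_cases hB3' : j.val + r + 1 = N - 1
      · -- x = N-1, pred = N-2, layer 1 weight 1
        have hx : (ccwU j (r+1)).val = N - 1 := by rw [ccwU_val_lt (by omega)]; omega
        have hp : (ccwU j r).val = N - 2 := by rw [ccwU_val_lt (by omega)]; omega
        refine or_step_path hA (le_of_eq (pathW_endTop hx hp (by omega)).symm) ?_
        have : ccwU j (r+1) = (⟨N-1, by omega⟩ : Fin N) := Fin.ext hx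
        rw [this]
        exact hB3
      · by_cases hB4' : j.val + r + 1 = N
        · -- x = 0, pred = N-1, layer 2 weight 1/2
          have hx : (ccwU j (r+1)).val = 0 := by rw [ccwU_val_ge (by omega) (by omega)]; omega
          have hp : (ccwU j r).val = N - 1 := by rw [ccwU_val_lt (by omega)]; omega
          refine or_step_perm hA (le_of_eq (permW2_0_top hx hp hN).symm) ?_
          have : ccwU j (r+1) = (⟨0, by omega⟩ : Fin N) := Fin.ext hx
          rw [this]
          exact hB4
        · -- x = j + r + 1 - N ∈ [1, i]
          have hre : r + 1 ≤ e := by omega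
          have hx : (ccwU j (r+1)).val = j.val + (r+1) - N :=
            ccwU_val_ge (by omega) (by omega)
          have hp : (ccwU j r).val = j.val + r - N := ccwU_val_ge (by omega) (by omega)
          have hxr : 1 ≤ (ccwU j (r+1)).val ∧ (ccwU j (r+1)).val ≤ i.val := by omega
          rcases hμA (ccwU j (r+1)) (Or.inr hxr) with hc | hc
          · exact or_step_path hA
              (le_of_eq (pathW_adj_int (by omega) (by omega) (by omega)).symm) hc
          · exact or_step_perm hA
              (le_of_eq (permW2_adj_int (by omega) hN (by omega)).symm) hc

end orchains

lemma filter_val_card {N : ℕ} (P : ℕ → Prop) [DecidablePred P] :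
    (Finset.univ.filter (fun a : Fin N => P a.val)).card = ((Finset.range N).filter P).card := by
  rw [← Finset.card_image_of_injOn (f := Fin.val) (Fin.val_injective.injOn)]
  congr 1
  ext x
  simp only [Finset.mem_image, Finset.mem_filter, Finset.mem_range, Finset.mem_univ, true_and]
  constructor
  · rintro ⟨a, ha, rfl⟩; exact ⟨a.isLt, ha⟩
  · rintro ⟨hx, hP⟩; exact ⟨⟨x, hx⟩, hP, rfl⟩

/-- Lower bound for the cycle probability. -/
lemma cycle_ge {N : ℕ} (hN : 7 ≤ N) (u : Fin N → Protocol) (i j : Fin N)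
    (hi1 : 1 ≤ i.val) (hi2 : i.val ≤ N - 3) (hj1 : 1 ≤ j.val) (hj2 : j.val ≤ N - 3) :
    (1/2 : ℝ) ^ (Nat.dist i.val j.val) ≤ pLTM (fun _ : Fin 1 => cycleW N) u {j} i := by
  classical
  set d := Nat.dist i.val j.val with hdd
  set C1 : Finset (Fin N) := Finset.univ.filter (fun a =>
    if j.val ≤ i.val then (j.val < a.val ∧ a.val ≤ i.val)
    else (i.val ≤ a.val ∧ a.val < j.val)) with hC1
  set X : Set (Fin N → Fin 1 → ℝ) := {μ | ∀ a ∈ C1, μ a ∈ {g : Fin 1 → ℝ | g 0 < 1/2}} with hX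
  have hsub : X ⊆ {μ | i ∈ ltmSS (fun _ : Fin 1 => cycleW N) u {j} μ} := by
    intro μ hμ
    apply cycle_low hN u i j hi1 hi2 hj1 hj2
    intro r hr
    rw [Finset.mem_Icc] at hr
    apply hμ
    simp only [hC1, Finset.mem_filter, Finset.mem_univ, true_and]
    rw [chainNode_val (by omega)]
    rcases le_or_gt j.val i.val with h | h
    · have : d = i.val - j.val := by
        rw [hdd, Nat.dist_comm]; exact Nat.dist_eq_sub_of_le h
      rw [if_pos h, if_pos h]
      omega
    · have : d = j.val - i.val := by
        rw [hdd]; exact Nat.dist_eq_sub_of_le (by omega)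
      rw [if_neg (by omega), if_neg (by omega)]
      omega
  have hcard : C1.card = d := by
    rw [hC1, filter_val_card (fun x =>
      if j.val ≤ i.val then (j.val < x ∧ x ≤ i.val) else (i.val ≤ x ∧ x < j.val))]
    rcases le_or_gt j.val i.val with h | h
    · have hd' : d = i.val - j.val := by
        rw [hdd, Nat.dist_comm]; exact Nat.dist_eq_sub_of_le h
      have : (Finset.range N).filter (fun x =>
          if j.val ≤ i.val then (j.val < x ∧ x ≤ i.val) else (i.val ≤ x ∧ x < j.val)) =
          Finset.Ioc j.val i.val := by
        ext x
        simp only [Finset.mem_filter, Finset.mem_range, Finset.mem_Ioc, if_pos h]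
        have := i.isLt
        omega
      rw [this, Nat.card_Ioc]
      omega
    · have hd' : d = j.val - i.val := by
        rw [hdd]; exact Nat.dist_eq_sub_of_le (by omega)
      have : (Finset.range N).filter (fun x =>
          if j.val ≤ i.val then (j.val < x ∧ x ≤ i.val) else (i.val ≤ x ∧ x < j.val)) =
          Finset.Ico i.val j.val := by
        ext x
        simp only [Finset.mem_filter, Finset.mem_range, Finset.mem_Ico, if_neg (by omega : ¬ j.val ≤ i.val)]
        have := j.isLt
        omega
      rw [this, Nat.card_Ico]
      omega
  have hmX : thMeasure N 1 X = ENNReal.ofReal ((1/2 : ℝ) ^ d) := by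
    rw [hX, prodEvent C1 (fun _ => {g : Fin 1 → ℝ | g 0 < 1/2})]
    rw [Finset.prod_const, v1Half, hcard, ← ENNReal.ofReal_pow (by norm_num)]
  have hle := measure_mono hsub (μ := thMeasure N 1)
  rw [hmX] at hle
  unfold pLTM
  calc (1/2 : ℝ) ^ d = (ENNReal.ofReal ((1/2 : ℝ) ^ d)).toReal := by
        rw [ENNReal.toReal_ofReal (by positivity)]
  _ ≤ _ := ENNReal.toReal_mono (measure_ne_top _ _) hle

/-- Upper bound for the AND probability on the duplex. -/
lemma and_le {N : ℕ} (hN : 7 ≤ N) (i j : Fin N)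
    (hi1 : 2 ≤ i.val) (hi2 : i.val ≤ N - 4) (hj1 : 1 ≤ j.val) (hj2 : j.val ≤ N - 3) :
    pLTM (fun k : Fin 2 => if k = 0 then pathW N else permW2 N)
      (fun _ => Protocol.AND) {j} i ≤ (1/4 : ℝ) ^ (Nat.dist i.val j.val) := by
  classical
  set d := Nat.dist i.val j.val with hdd
  set C1 : Finset (Fin N) := Finset.univ.filter (fun a =>
    if j.val ≤ i.val then (j.val < a.val ∧ a.val ≤ i.val)
    else (i.val ≤ a.val ∧ a.val < j.val)) with hC1
  set Z : Set (Fin N → Fin 2 → ℝ) :=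
    {μ | ∀ a ∈ C1, μ a ∈ {g : Fin 2 → ℝ | g 0 < 1/2 ∧ g 1 < 1/2}} with hZ
  set Nb : Set (Fin N → Fin 2 → ℝ) := {μ | ¬ ∀ (a : Fin N) (k : Fin 2), 0 ≤ μ a k} with hNb
  have hsub : {μ : Fin N → Fin 2 → ℝ |
      i ∈ ltmSS (fun k : Fin 2 => if k = 0 then pathW N else permW2 N)
        (fun _ => Protocol.AND) {j} μ} ⊆ Nb ∪ Z := by
    intro μ hμ
    by_cases hpos : ∀ (a : Fin N) (k : Fin 2), 0 ≤ μ a k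
    · right
      by_contra hz
      simp only [hZ, Set.mem_setOf_eq, not_forall] at hz
      obtain ⟨a, haC, hafail⟩ := hz
      simp only [hC1, Finset.mem_filter, Finset.mem_univ, true_and] at haC
      have hfail' : ¬ μ a 0 < 1/2 ∨ ¬ μ a 1 < 1/2 := by
        by_contra hcon
        push_neg at hcon
        exact hafail ⟨hcon.1, hcon.2⟩
      have haeq : a = (⟨a.val, a.isLt⟩ : Fin N) := Fin.ext rfl
      rcases le_or_gt j.val i.val with h | h
      · rw [if_pos h] at haC
        refine andBlock1 hN j μ hpos a.val (by omega) (by omega) (by omega) ?_ i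
          (by omega) (by omega) hμ
        rw [← haeq]
        exact hfail'
      · rw [if_neg (by omega)] at haC
        refine andBlock2 hN j μ hpos a.val (by omega) (by omega) (by omega) ?_ i
          (by omega) hμ
        rw [← haeq]
        exact hfail'
    · exact Or.inl hpos
  have hcard : C1.card = d := by
    rw [hC1, filter_val_card (fun x =>
      if j.val ≤ i.val then (j.val < x ∧ x ≤ i.val) else (i.val ≤ x ∧ x < j.val))]
    rcases le_or_gt j.val i.val with h | h
    · have hd' : d = i.val - j.val := by
        rw [hdd, Nat.dist_comm]; exact Nat.dist_eq_sub_of_le h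
      have : (Finset.range N).filter (fun x =>
          if j.val ≤ i.val then (j.val < x ∧ x ≤ i.val) else (i.val ≤ x ∧ x < j.val)) =
          Finset.Ioc j.val i.val := by
        ext x
        simp only [Finset.mem_filter, Finset.mem_range, Finset.mem_Ioc, if_pos h]
        have := i.isLt
        omega
      rw [this, Nat.card_Ioc]
      omega
    · have hd' : d = j.val - i.val := by
        rw [hdd]; exact Nat.dist_eq_sub_of_le (by omega)
      have : (Finset.range N).filter (fun x =>
          if j.val ≤ i.val then (j.val < x ∧ x ≤ i.val) else (i.val ≤ x ∧ x < j.val)) =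
          Finset.Ico i.val j.val := by
        ext x
        simp only [Finset.mem_filter, Finset.mem_range, Finset.mem_Ico,
          if_neg (by omega : ¬ j.val ≤ i.val)]
        have := j.isLt
        omega
      rw [this, Nat.card_Ico]
      omega
  have hmZ : thMeasure N 2 Z = ENNReal.ofReal ((1/4 : ℝ) ^ d) := by
    rw [hZ, prodEvent C1 (fun _ => {g : Fin 2 → ℝ | g 0 < 1/2 ∧ g 1 < 1/2})]
    rw [Finset.prod_const, vBoth, hcard, ← ENNReal.ofReal_pow (by norm_num)]
  have hle : thMeasure N 2 {μ : Fin N → Fin 2 → ℝ |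
      i ∈ ltmSS (fun k : Fin 2 => if k = 0 then pathW N else permW2 N)
        (fun _ => Protocol.AND) {j} μ} ≤ ENNReal.ofReal ((1/4 : ℝ) ^ d) := by
    calc _ ≤ thMeasure N 2 (Nb ∪ Z) := measure_mono hsub
    _ ≤ thMeasure N 2 Nb + thMeasure N 2 Z := measure_union_le _ _
    _ = ENNReal.ofReal ((1/4 : ℝ) ^ d) := by
        rw [hNb, badNull, hmZ, zero_add]
  unfold pLTM
  calc (thMeasure N 2 _).toReal ≤ (ENNReal.ofReal ((1/4 : ℝ) ^ d)).toReal :=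
        ENNReal.toReal_mono ENNReal.ofReal_ne_top hle
  _ = (1/4 : ℝ) ^ d := ENNReal.toReal_ofReal (by positivity)

/-- Upper bound for the cycle probability. -/
lemma cycle_le {N : ℕ} (hN : 7 ≤ N) (u : Fin N → Protocol) (i j : Fin N)
    (hi1 : 2 ≤ i.val) (hi2 : i.val ≤ N - 4) (hj1 : 1 ≤ j.val) (hj2 : j.val ≤ N - 3)
    (hd : 2 ≤ Nat.dist i.val j.val) :
    pLTM (fun _ : Fin 1 => cycleW N) u {j} i ≤
      (1/2 : ℝ) ^ (Nat.dist i.val j.val) + (1/2 : ℝ) ^ (N - Nat.dist i.val j.val) +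
        (1/2 : ℝ) ^ (N - 2) := by
  classical
  set d := Nat.dist i.val j.val with hdd
  have hiN := i.isLt
  have hjN := j.isLt
  have hdval : (j.val ≤ i.val → d = i.val - j.val) ∧ (i.val < j.val → d = j.val - i.val) := by
    constructor
    · intro h; rw [hdd, Nat.dist_comm]; exact Nat.dist_eq_sub_of_le h
    · intro h; rw [hdd]; exact Nat.dist_eq_sub_of_le (by omega)
  set C1 : Finset (Fin N) := Finset.univ.filter (fun a =>
    if j.val ≤ i.val then (j.val < a.val ∧ a.val ≤ i.val)
    else (i.val ≤ a.val ∧ a.val < j.val)) with hC1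
  set C2 : Finset (Fin N) := Finset.univ.filter (fun a =>
    if j.val ≤ i.val then (a.val < j.val ∨ i.val ≤ a.val)
    else (j.val < a.val ∨ a.val ≤ i.val)) with hC2
  set C3 : Finset (Fin N) := Finset.univ.filter (fun a =>
    ¬(a.val = i.val ∨ a.val = j.val)) with hC3
  set H : Set (Fin 1 → ℝ) := {g : Fin 1 → ℝ | g 0 < 1/2} with hH
  set X1 : Set (Fin N → Fin 1 → ℝ) := {μ | ∀ a ∈ C1, μ a ∈ H} with hX1
  set X2 : Set (Fin N → Fin 1 → ℝ) := {μ | ∀ a ∈ C2, μ a ∈ H} with hX2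
  set X3 : Set (Fin N → Fin 1 → ℝ) := {μ | ∀ a ∈ C3, μ a ∈ H} with hX3
  set Nb : Set (Fin N → Fin 1 → ℝ) := {μ | ¬ ∀ (a : Fin N) (k : Fin 1), 0 ≤ μ a k} with hNb
  have hsub : {μ : Fin N → Fin 1 → ℝ | i ∈ ltmSS (fun _ : Fin 1 => cycleW N) u {j} μ} ⊆
      Nb ∪ (X1 ∪ X2 ∪ X3) := by
    intro μ hμ
    by_cases hpos : ∀ (a : Fin N) (k : Fin 1), 0 ≤ μ a k
    · right
      by_contra hz
      simp only [Set.mem_union, not_or] at hz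
      obtain ⟨⟨hz1, hz2⟩, hz3⟩ := hz
      simp only [hX1, hX2, hX3, Set.mem_setOf_eq, not_forall] at hz1 hz2 hz3
      obtain ⟨gf, hgC, hgF⟩ := hz1
      obtain ⟨df, hdC, hdF⟩ := hz2
      obtain ⟨ef, heC, heF⟩ := hz3
      simp only [hC1, hC2, hC3, Finset.mem_filter, Finset.mem_univ, true_and] at hgC hdC heC
      simp only [hH, Set.mem_setOf_eq] at hgF hdF heF
      have hgeq : gf = (⟨gf.val, gf.isLt⟩ : Fin N) := Fin.ext rfl
      have hdeq : df = (⟨df.val, df.isLt⟩ : Fin N) := Fin.ext rfl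
      have heeq : ef = (⟨ef.val, ef.isLt⟩ : Fin N) := Fin.ext rfl
      rw [hgeq] at hgF
      rw [hdeq] at hdF
      rw [heeq] at heF
      have hdfN := df.isLt
      have hefN := ef.isLt
      have hgfN := gf.isLt
      rcases le_or_gt j.val i.val with hcase | hcase
      · rw [if_pos hcase] at hgC hdC
        have hdge : i.val - j.val = d := (hdval.1 hcase).symm
        rcases hdC with hdC | hdC
        · -- δ < j
          exact cycBlock2 hN u j μ hpos df.val gf.val (by omega) (by omega) (by omega)
            (by omega) hdF hgF i (Or.inr (by omega)) hμ
        · -- δ ≥ i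
          by_cases hgd : gf.val < df.val
          · exact cycBlock hN u j μ hpos gf.val df.val (by omega) (by omega)
              (Or.inl (by omega)) hgF hdF i (by omega) (by omega) hμ
          · -- γ = δ = i
            have hgi : gf.val = i.val := by omega
            have hgi' : (⟨gf.val, gf.isLt⟩ : Fin N) = ⟨i.val, i.isLt⟩ := Fin.ext hgi
            rw [hgi'] at hgF
            rcases lt_or_gt_of_ne (show ef.val ≠ i.val by omega) with hei | hei
            · rcases lt_or_gt_of_ne (show ef.val ≠ j.val by omega) with hej | hej
              · -- ε < j
                exact cycBlock2 hN u j μ hpos ef.val i.val (by omega) (by omega)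
                  (by omega) (by omega) heF hgF i (Or.inr (by omega)) hμ
              · -- j < ε < i
                exact cycBlock hN u j μ hpos ef.val i.val (by omega) (by omega)
                  (Or.inl (by omega)) heF hgF i (by omega) (by omega) hμ
            · -- ε > i
              exact cycBlock hN u j μ hpos i.val ef.val (by omega) (by omega)
                (Or.inl (by omega)) hgF heF i (by omega) (by omega) hμ
      · rw [if_neg (by omega)] at hgC hdC
        have hdge : j.val - i.val = d := (hdval.2 hcase).symm
        rcases hdC with hdC | hdC
        · -- δ > j
          exact cycBlock2 hN u j μ hpos gf.val df.val (by omega) (by omega) (by omega)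
            (by omega) hgF hdF i (Or.inl (by omega)) hμ
        · -- δ ≤ i
          by_cases hgd : df.val < gf.val
          · exact cycBlock hN u j μ hpos df.val gf.val (by omega) (by omega)
              (Or.inr (by omega)) hdF hgF i (by omega) (by omega) hμ
          · -- γ = δ = i
            have hgi : gf.val = i.val := by omega
            have hgi' : (⟨gf.val, gf.isLt⟩ : Fin N) = ⟨i.val, i.isLt⟩ := Fin.ext hgi
            rw [hgi'] at hgF
            rcases lt_or_gt_of_ne (show ef.val ≠ i.val by omega) with hei | hei
            · -- ε < i
              exact cycBlock hN u j μ hpos ef.val i.val (by omega) (by omega)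
                (Or.inr (by omega)) heF hgF i (by omega) (by omega) hμ
            · rcases lt_or_gt_of_ne (show ef.val ≠ j.val by omega) with hej | hej
              · -- i < ε < j
                exact cycBlock hN u j μ hpos i.val ef.val (by omega) (by omega)
                  (Or.inr (by omega)) hgF heF i (by omega) (by omega) hμ
              · -- ε > j
                exact cycBlock2 hN u j μ hpos i.val ef.val (by omega) (by omega)
                  (by omega) (by omega) hgF heF i (Or.inl (by omega)) hμ
    · exact Or.inl hpos
  -- cardinalities
  have hcard1 : C1.card = d := by
    rw [hC1, filter_val_card (fun x =>
      if j.val ≤ i.val then (j.val < x ∧ x ≤ i.val) else (i.val ≤ x ∧ x < j.val))]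
    rcases le_or_gt j.val i.val with h | h
    · have : (Finset.range N).filter (fun x =>
          if j.val ≤ i.val then (j.val < x ∧ x ≤ i.val) else (i.val ≤ x ∧ x < j.val)) =
          Finset.Ioc j.val i.val := by
        ext x
        simp only [Finset.mem_filter, Finset.mem_range, Finset.mem_Ioc, if_pos h]
        omega
      rw [this, Nat.card_Ioc]
      have := hdval.1 h
      omega
    · have : (Finset.range N).filter (fun x =>
          if j.val ≤ i.val then (j.val < x ∧ x ≤ i.val) else (i.val ≤ x ∧ x < j.val)) =
          Finset.Ico i.val j.val := by
        ext x
        simp only [Finset.mem_filter, Finset.mem_range, Finset.mem_Ico,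
          if_neg (by omega : ¬ j.val ≤ i.val)]
        omega
      rw [this, Nat.card_Ico]
      have := hdval.2 h
      omega
  have hcard2 : C2.card = N - d := by
    rw [hC2, filter_val_card (fun x =>
      if j.val ≤ i.val then (x < j.val ∨ i.val ≤ x) else (j.val < x ∨ x ≤ i.val))]
    have hsplit := Finset.card_filter_add_card_filter_not (s := Finset.range N)
      (p := fun x => if j.val ≤ i.val then (x < j.val ∨ i.val ≤ x) else (j.val < x ∨ x ≤ i.val))
    rw [Finset.card_range] at hsplit
    rcases le_or_gt j.val i.val with h | h
    · have hneg : (Finset.range N).filter (fun x =>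
          ¬ (if j.val ≤ i.val then (x < j.val ∨ i.val ≤ x) else (j.val < x ∨ x ≤ i.val))) =
          Finset.Ico j.val i.val := by
        ext x
        simp only [Finset.mem_filter, Finset.mem_range, Finset.mem_Ico, if_pos h]
        omega
      rw [hneg, Nat.card_Ico] at hsplit
      have := hdval.1 h
      omega
    · have hneg : (Finset.range N).filter (fun x =>
          ¬ (if j.val ≤ i.val then (x < j.val ∨ i.val ≤ x) else (j.val < x ∨ x ≤ i.val))) =
          Finset.Ioc i.val j.val := by
        ext x
        simp only [Finset.mem_filter, Finset.mem_range, Finset.mem_Ioc,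
          if_neg (by omega : ¬ j.val ≤ i.val)]
        omega
      rw [hneg, Nat.card_Ioc] at hsplit
      have := hdval.2 h
      omega
  have hij : i.val ≠ j.val := by
    simp only [hdd, Nat.dist] at hd
    omega
  have hcard3 : C3.card = N - 2 := by
    rw [hC3, filter_val_card (fun x => ¬(x = i.val ∨ x = j.val))]
    have hsplit := Finset.card_filter_add_card_filter_not (s := Finset.range N)
      (p := fun x => ¬(x = i.val ∨ x = j.val))
    rw [Finset.card_range] at hsplit
    have hneg : (Finset.range N).filter (fun x => ¬¬(x = i.val ∨ x = j.val)) =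
        {i.val, j.val} := by
      ext x
      simp only [Finset.mem_filter, Finset.mem_range, Finset.mem_insert, Finset.mem_singleton,
        not_not]
      omega
    rw [hneg] at hsplit
    rw [Finset.card_insert_of_notMem (by simp [hij]), Finset.card_singleton] at hsplit
    omega
  -- measures
  have hmX1 : thMeasure N 1 X1 = ENNReal.ofReal ((1/2 : ℝ) ^ d) := by
    rw [hX1, prodEvent C1 (fun _ => H), hH, Finset.prod_const, v1Half, hcard1,
      ← ENNReal.ofReal_pow (by norm_num)]
  have hmX2 : thMeasure N 1 X2 = ENNReal.ofReal ((1/2 : ℝ) ^ (N - d)) := by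
    rw [hX2, prodEvent C2 (fun _ => H), hH, Finset.prod_const, v1Half, hcard2,
      ← ENNReal.ofReal_pow (by norm_num)]
  have hmX3 : thMeasure N 1 X3 = ENNReal.ofReal ((1/2 : ℝ) ^ (N - 2)) := by
    rw [hX3, prodEvent C3 (fun _ => H), hH, Finset.prod_const, v1Half, hcard3,
      ← ENNReal.ofReal_pow (by norm_num)]
  have hle : thMeasure N 1 {μ : Fin N → Fin 1 → ℝ |
      i ∈ ltmSS (fun _ : Fin 1 => cycleW N) u {j} μ} ≤
      ENNReal.ofReal ((1/2 : ℝ) ^ d + (1/2 : ℝ) ^ (N - d) + (1/2 : ℝ) ^ (N - 2)) := by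
    calc _ ≤ thMeasure N 1 (Nb ∪ (X1 ∪ X2 ∪ X3)) := measure_mono hsub
    _ ≤ thMeasure N 1 Nb + thMeasure N 1 (X1 ∪ X2 ∪ X3) := measure_union_le _ _
    _ ≤ thMeasure N 1 Nb + (thMeasure N 1 (X1 ∪ X2) + thMeasure N 1 X3) :=
        add_le_add le_rfl (measure_union_le _ _)
    _ ≤ thMeasure N 1 Nb + (thMeasure N 1 X1 + thMeasure N 1 X2 + thMeasure N 1 X3) := by
        gcongr
        exact measure_union_le _ _
    _ = ENNReal.ofReal ((1/2 : ℝ) ^ d + (1/2 : ℝ) ^ (N - d) + (1/2 : ℝ) ^ (N - 2)) := by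
        rw [hNb, badNull, hmX1, hmX2, hmX3, zero_add,
          ← ENNReal.ofReal_add (by positivity) (by positivity),
          ← ENNReal.ofReal_add (by positivity) (by positivity)]
  unfold pLTM
  calc (thMeasure N 1 _).toReal ≤
      (ENNReal.ofReal ((1/2 : ℝ) ^ d + (1/2 : ℝ) ^ (N - d) + (1/2 : ℝ) ^ (N - 2))).toReal :=
        ENNReal.toReal_mono ENNReal.ofReal_ne_top hle
  _ = _ := ENNReal.toReal_ofReal (by positivity)

lemma measurable_prodEvent {N m : ℕ} (C : Finset (Fin N)) (G : Fin N → Set (Fin m → ℝ))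
    (hG : ∀ a, MeasurableSet (G a)) :
    MeasurableSet {μ : Fin N → Fin m → ℝ | ∀ a ∈ C, μ a ∈ G a} := by
  have heq : {μ : Fin N → Fin m → ℝ | ∀ a ∈ C, μ a ∈ G a} =
      ⋂ a ∈ (C : Set (Fin N)), (fun μ : Fin N → Fin m → ℝ => μ a) ⁻¹' (G a) := by
    ext μ; simp
  rw [heq]
  exact MeasurableSet.biInter (C : Set (Fin N)).to_countable
    (fun a _ => (measurable_pi_apply a) (hG a))

lemma meas_set0 {c : ℝ} : MeasurableSet {g : Fin 2 → ℝ | g 0 < c} :=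
  measurable_pi_apply 0 measurableSet_Iio

lemma meas_set1 {c : ℝ} : MeasurableSet {g : Fin 2 → ℝ | g 1 < c} :=
  measurable_pi_apply 1 measurableSet_Iio

lemma meas_setOr : MeasurableSet {g : Fin 2 → ℝ | g 0 < 1/2 ∨ g 1 < 1/2} := by
  have : {g : Fin 2 → ℝ | g 0 < 1/2 ∨ g 1 < 1/2} =
      {g : Fin 2 → ℝ | g 0 < 1/2} ∪ {g : Fin 2 → ℝ | g 1 < 1/2} := rfl
  rw [this]
  exact meas_set0.union meas_set1

lemma prod_erase3 {N : ℕ} (C : Finset (Fin N)) (h : Fin N → ENNReal) (z0 z1 z2 : Fin N)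
    (c : ENNReal)
    (h0 : z0 ∈ C) (h1 : z1 ∈ C) (h2 : z2 ∈ C)
    (d01 : z0 ≠ z1) (d02 : z0 ≠ z2) (d12 : z1 ≠ z2)
    (hother : ∀ a ∈ C, a ≠ z0 → a ≠ z1 → a ≠ z2 → h a = c) :
    ∏ a ∈ C, h a = h z0 * h z1 * h z2 * c ^ (C.card - 3) := by
  rw [← Finset.mul_prod_erase C h h0]
  rw [← Finset.mul_prod_erase _ h (Finset.mem_erase.mpr ⟨d01.symm, h1⟩)]
  rw [← Finset.mul_prod_erase _ h
    (Finset.mem_erase.mpr ⟨d12.symm, Finset.mem_erase.mpr ⟨d02.symm, h2⟩⟩)]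
  have hconst : ∏ a ∈ ((C.erase z0).erase z1).erase z2, h a =
      c ^ (C.card - 3) := by
    rw [Finset.prod_congr rfl (fun a ha => by
      simp only [Finset.mem_erase] at ha
      exact hother a ha.2.2.2 ha.2.2.1 ha.2.1 ha.1)]
    rw [Finset.prod_const]
    congr 1
    rw [Finset.card_erase_of_mem
      (Finset.mem_erase.mpr ⟨d12.symm, Finset.mem_erase.mpr ⟨d02.symm, h2⟩⟩),
      Finset.card_erase_of_mem (Finset.mem_erase.mpr ⟨d01.symm, h1⟩),
      Finset.card_erase_of_mem h0]
    omega
  rw [hconst]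
  ring

lemma arith_facts (p q : ℕ) :
    (0:ℝ) < (1/2)^p ∧ (1/2:ℝ)^p ≤ (3/4)^p ∧ (3/4:ℝ)^p ≤ 1 ∧
    (0:ℝ) < (1/2)^q ∧ (1/2:ℝ)^q ≤ (3/4)^q ∧ (3/4:ℝ)^q ≤ 1 := by
  refine ⟨by positivity, ?_, ?_, by positivity, ?_, ?_⟩
  · exact pow_le_pow_left₀ (by norm_num) (by norm_num) p
  · exact pow_le_one₀ (by norm_num) (by norm_num)
  · exact pow_le_pow_left₀ (by norm_num) (by norm_num) q
  · exact pow_le_one₀ (by norm_num) (by norm_num)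

lemma arith1 (p q : ℕ) :
    (1/2:ℝ)^(2+p) + (1/2)^(4+q) + (1/2)^(4+p+q) <
    (3/4:ℝ)^(2+p) + (1/2)*(3/4)^(1+q) - (1/2)*(3/4)^(2+p+q) := by
  obtain ⟨hx0, hxu, hu1, hy0, hyv, hv1⟩ := arith_facts p q
  set x := (1/2:ℝ)^p
  set y := (1/2:ℝ)^q
  set u := (3/4:ℝ)^p
  set v := (3/4:ℝ)^q
  have hy1 : y ≤ 1 := hyv.trans hv1
  have hu0 : (0:ℝ) < u := lt_of_lt_of_le hx0 hxu
  have hv0 : (0:ℝ) < v := lt_of_lt_of_le hy0 hyv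
  have e1 : (1/2:ℝ)^(2+p) = (1/4) * x := by rw [pow_add]; norm_num; rfl
  have e2 : (1/2:ℝ)^(4+q) = (1/16) * y := by rw [pow_add]; norm_num; rfl
  have e3 : (1/2:ℝ)^(4+p+q) = (1/16) * (x*y) := by
    rw [show 4+p+q = (4+p)+q from rfl, pow_add, pow_add]; ring
  have e4 : (3/4:ℝ)^(2+p) = (9/16) * u := by rw [pow_add]; norm_num; rfl
  have e5 : (3/4:ℝ)^(1+q) = (3/4) * v := by rw [pow_add]; norm_num; rfl
  have e6 : (3/4:ℝ)^(2+p+q) = (9/16) * (u*v) := by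
    rw [show 2+p+q = (2+p)+q from rfl, pow_add, pow_add]; ring
  rw [e1, e2, e3, e4, e5, e6]
  have f1 : x*y ≤ x := by nlinarith
  have f2 : u*v ≤ v := by nlinarith
  nlinarith

lemma arith3 (p q : ℕ) :
    (1/2:ℝ)^(2+p) + (1/2)^(4+q) <
    (3/4:ℝ)^(2+p) + (1/2)*(3/4)^(1+q) - (1/2)*(3/4)^(1+p+q) := by
  obtain ⟨hx0, hxu, hu1, hy0, hyv, hv1⟩ := arith_facts p q
  set x := (1/2:ℝ)^p
  set y := (1/2:ℝ)^q
  set u := (3/4:ℝ)^p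
  set v := (3/4:ℝ)^q
  have hy1 : y ≤ 1 := hyv.trans hv1
  have hu0 : (0:ℝ) < u := lt_of_lt_of_le hx0 hxu
  have hv0 : (0:ℝ) < v := lt_of_lt_of_le hy0 hyv
  have e1 : (1/2:ℝ)^(2+p) = (1/4) * x := by rw [pow_add]; norm_num; rfl
  have e2 : (1/2:ℝ)^(4+q) = (1/16) * y := by rw [pow_add]; norm_num; rfl
  have e4 : (3/4:ℝ)^(2+p) = (9/16) * u := by rw [pow_add]; norm_num; rfl
  have e5 : (3/4:ℝ)^(1+q) = (3/4) * v := by rw [pow_add]; norm_num; rfl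
  have e6 : (3/4:ℝ)^(1+p+q) = (3/4) * (u*v) := by
    rw [show 1+p+q = (1+p)+q from rfl, pow_add, pow_add]; ring
  rw [e1, e2, e4, e5, e6]
  have f1 : (v - y) * (1 - u) ≥ 0 := mul_nonneg (by linarith) (by linarith)
  have f2 : y * u ≤ u := by nlinarith
  have f3 : y * u ≤ y := by nlinarith
  nlinarith

set_option maxHeartbeats 1000000 in
/-- Lower bound for the OR probability on the duplex. -/
lemma or_ge {N : ℕ} (hN : 7 ≤ N) (i j : Fin N)
    (hi1 : 2 ≤ i.val) (hi2 : i.val ≤ N - 4) (hj1 : 1 ≤ j.val) (hj2 : j.val ≤ N - 3)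
    (hd : 2 ≤ Nat.dist i.val j.val) :
    (3/4 : ℝ) ^ (Nat.dist i.val j.val) +
      (1/2) * (3/4 : ℝ) ^ (N - Nat.dist i.val j.val - 3) -
      (1/2) * (3/4 : ℝ) ^ (N - 4) ≤
    pLTM (fun k : Fin 2 => if k = 0 then pathW N else permW2 N)
      (fun _ => Protocol.OR) {j} i := by
  classical
  set d := Nat.dist i.val j.val with hdd
  have hiN := i.isLt
  have hjN := j.isLt
  have hdval : (j.val ≤ i.val → d = i.val - j.val) ∧ (i.val < j.val → d = j.val - i.val) := by
    constructor
    · intro h; rw [hdd, Nat.dist_comm]; exact Nat.dist_eq_sub_of_le h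
    · intro h; rw [hdd]; exact Nat.dist_eq_sub_of_le (by omega)
  set OrS : Set (Fin 2 → ℝ) := {g : Fin 2 → ℝ | g 0 < 1/2 ∨ g 1 < 1/2} with hOrS
  set G : Fin N → Set (Fin 2 → ℝ) := fun a =>
    if a.val = 0 then (if j.val ≤ i.val then {g : Fin 2 → ℝ | g 0 < 1}
      else {g : Fin 2 → ℝ | g 1 < 1/2})
    else if a.val = N - 1 then (if j.val ≤ i.val then {g : Fin 2 → ℝ | g 1 < 1}
      else {g : Fin 2 → ℝ | g 0 < 1})
    else if a.val = N - 2 then (if j.val ≤ i.val then {g : Fin 2 → ℝ | g 0 < 1/2}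
      else {g : Fin 2 → ℝ | g 1 < 1})
    else OrS with hG
  have hGmeas : ∀ a, MeasurableSet (G a) := by
    intro a
    rw [hG]
    dsimp only
    split_ifs <;> first
      | exact meas_set0
      | exact meas_set1
      | exact meas_setOr
  have hGval : ∀ a : Fin N, 1 ≤ a.val → a.val ≤ N - 3 → a.val ≠ N - 2 → G a = OrS := by
    intro a h1 h2 h3
    rw [hG]
    dsimp only
    rw [if_neg (by omega), if_neg (by omega), if_neg h3]
  set C1 : Finset (Fin N) := Finset.univ.filter (fun a =>
    if j.val ≤ i.val then (j.val < a.val ∧ a.val ≤ i.val)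
    else (i.val ≤ a.val ∧ a.val < j.val)) with hC1
  set C2 : Finset (Fin N) := Finset.univ.filter (fun a =>
    if j.val ≤ i.val then (a.val < j.val ∨ i.val ≤ a.val)
    else (j.val < a.val ∨ a.val ≤ i.val)) with hC2
  set C4 : Finset (Fin N) := Finset.univ.filter (fun a => a.val ≠ j.val) with hC4
  set X : Set (Fin N → Fin 2 → ℝ) := {μ | ∀ a ∈ C1, μ a ∈ G a} with hX
  set Y : Set (Fin N → Fin 2 → ℝ) := {μ | ∀ a ∈ C2, μ a ∈ G a} with hY
  set z0 : Fin N := ⟨0, by omega⟩ with hz0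
  set z1 : Fin N := ⟨N - 1, by omega⟩ with hz1
  set z2 : Fin N := ⟨N - 2, by omega⟩ with hz2
  have hv0 : z0.val = 0 := rfl
  have hv1 : z1.val = N - 1 := rfl
  have hv2 : z2.val = N - 2 := rfl
  -- the values of G at the three special agents
  have hGz0 : G z0 = (if j.val ≤ i.val then {g : Fin 2 → ℝ | g 0 < 1}
      else {g : Fin 2 → ℝ | g 1 < 1/2}) := by
    rw [hG]; dsimp only; rw [if_pos hv0]
  have hGz1 : G z1 = (if j.val ≤ i.val then {g : Fin 2 → ℝ | g 1 < 1}
      else {g : Fin 2 → ℝ | g 0 < 1}) := by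
    rw [hG]; dsimp only; rw [if_neg (by omega), if_pos hv1]
  have hGz2 : G z2 = (if j.val ≤ i.val then {g : Fin 2 → ℝ | g 0 < 1/2}
      else {g : Fin 2 → ℝ | g 1 < 1}) := by
    rw [hG]; dsimp only; rw [if_neg (by omega), if_neg (by omega), if_pos hv2]
  have hC1bound : ∀ a ∈ C1, 2 ≤ a.val ∧ a.val ≤ N - 4 := by
    intro a ha
    rw [hC1, Finset.mem_filter] at ha
    rcases le_or_gt j.val i.val with h | h
    · rw [if_pos h] at ha; omega
    · rw [if_neg (by omega)] at ha; omega
  have hz0C2 : z0 ∈ C2 := by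
    rw [hC2, Finset.mem_filter]
    refine ⟨Finset.mem_univ _, ?_⟩
    rcases le_or_gt j.val i.val with h | h
    · rw [if_pos h]; omega
    · rw [if_neg (by omega)]; omega
  have hz1C2 : z1 ∈ C2 := by
    rw [hC2, Finset.mem_filter]
    refine ⟨Finset.mem_univ _, ?_⟩
    rcases le_or_gt j.val i.val with h | h
    · rw [if_pos h]; omega
    · rw [if_neg (by omega)]; omega
  have hz2C2 : z2 ∈ C2 := by
    rw [hC2, Finset.mem_filter]
    refine ⟨Finset.mem_univ _, ?_⟩
    rcases le_or_gt j.val i.val with h | h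
    · rw [if_pos h]; omega
    · rw [if_neg (by omega)]; omega
  have hz0C4 : z0 ∈ C4 := by
    rw [hC4, Finset.mem_filter]; exact ⟨Finset.mem_univ _, by omega⟩
  have hz1C4 : z1 ∈ C4 := by
    rw [hC4, Finset.mem_filter]; exact ⟨Finset.mem_univ _, by omega⟩
  have hz2C4 : z2 ∈ C4 := by
    rw [hC4, Finset.mem_filter]; exact ⟨Finset.mem_univ _, by omega⟩
  have hd01 : z0 ≠ z1 := by
    intro hcon
    have := congrArg Fin.val hcon
    omega
  have hd02 : z0 ≠ z2 := by
    intro hcon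
    have := congrArg Fin.val hcon
    omega
  have hd12 : z1 ≠ z2 := by
    intro hcon
    have := congrArg Fin.val hcon
    omega
  -- X is a subset of the event
  have hsubX : X ⊆ {μ : Fin N → Fin 2 → ℝ |
      i ∈ ltmSS (fun k : Fin 2 => if k = 0 then pathW N else permW2 N)
        (fun _ => Protocol.OR) {j} μ} := by
    intro μ hμ
    apply or_cw_low hN i j (by omega) (by omega) hj1 hj2
    intro r hr
    rw [Finset.mem_Icc] at hr
    have hmemC1 : chainNode i j r ∈ C1 := by
      rw [hC1, Finset.mem_filter]
      refine ⟨Finset.mem_univ _, ?_⟩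
      rw [chainNode_val (by omega)]
      rcases le_or_gt j.val i.val with h | h
      · have := hdval.1 h
        rw [if_pos h, if_pos h]; omega
      · have := hdval.2 h
        rw [if_neg (by omega), if_neg (by omega)]; omega
    have hbd := hC1bound _ hmemC1
    have := hμ _ hmemC1
    rw [hGval _ (by omega) (by omega) (by omega)] at this
    exact this
  -- Y is a subset of the event
  have hsubY : Y ⊆ {μ : Fin N → Fin 2 → ℝ |
      i ∈ ltmSS (fun k : Fin 2 => if k = 0 then pathW N else permW2 N)
        (fun _ => Protocol.OR) {j} μ} := by
    intro μ hμ
    rcases le_or_gt j.val i.val with h | h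
    · have hji : j.val < i.val := by
        rcases eq_or_lt_of_le h with h' | h'
        · exfalso; have := hdval.1 h; omega
        · exact h'
      apply or_ccw_low_gt hN i j hj1 hji hi2 μ
      · intro a ha
        have hmem : a ∈ C2 := by
          rw [hC2, Finset.mem_filter]
          exact ⟨Finset.mem_univ _, by rw [if_pos h]; omega⟩
        have := hμ _ hmem
        rw [hGval _ (by omega) (by omega) (by omega)] at this
        exact this
      · have := hμ _ hz0C2
        rw [hGz0, if_pos h] at this
        exact this
      · have := hμ _ hz1C2
        rw [hGz1, if_pos h] at this
        exact this
      · have := hμ _ hz2C2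
        rw [hGz2, if_pos h] at this
        exact this
    · apply or_ccw_low_lt hN i j (by omega) h hj2 hi2 μ
      · intro a ha
        have hmem : a ∈ C2 := by
          rw [hC2, Finset.mem_filter]
          exact ⟨Finset.mem_univ _, by rw [if_neg (by omega)]; omega⟩
        have := hμ _ hmem
        rw [hGval _ (by omega) (by omega) (by omega)] at this
        exact this
      · have := hμ _ hz2C2
        rw [hGz2, if_neg (by omega)] at this
        exact this
      · have := hμ _ hz1C2
        rw [hGz1, if_neg (by omega)] at this
        exact this
      · have := hμ _ hz0C2
        rw [hGz0, if_neg (by omega)] at this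
        exact this
  -- union of the index sets
  have hC12 : C1 ∪ C2 = C4 := by
    ext a
    rw [Finset.mem_union, hC1, hC2, hC4, Finset.mem_filter, Finset.mem_filter,
      Finset.mem_filter]
    rcases le_or_gt j.val i.val with h | h
    · simp only [if_pos h, Finset.mem_univ, true_and]
      omega
    · simp only [if_neg (by omega : ¬ j.val ≤ i.val), Finset.mem_univ, true_and]
      omega
  have hXY : X ∩ Y = {μ : Fin N → Fin 2 → ℝ | ∀ a ∈ C4, μ a ∈ G a} := by
    ext μ
    rw [Set.mem_inter_iff, hX, hY]
    simp only [Set.mem_setOf_eq]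
    rw [← Finset.forall_mem_union, hC12]
  -- cardinalities
  have hcard1 : C1.card = d := by
    rw [hC1, filter_val_card (fun x =>
      if j.val ≤ i.val then (j.val < x ∧ x ≤ i.val) else (i.val ≤ x ∧ x < j.val))]
    rcases le_or_gt j.val i.val with h | h
    · have : (Finset.range N).filter (fun x =>
          if j.val ≤ i.val then (j.val < x ∧ x ≤ i.val) else (i.val ≤ x ∧ x < j.val)) =
          Finset.Ioc j.val i.val := by
        ext x
        simp only [Finset.mem_filter, Finset.mem_range, Finset.mem_Ioc, if_pos h]
        omega
      rw [this, Nat.card_Ioc]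
      have := hdval.1 h
      omega
    · have : (Finset.range N).filter (fun x =>
          if j.val ≤ i.val then (j.val < x ∧ x ≤ i.val) else (i.val ≤ x ∧ x < j.val)) =
          Finset.Ico i.val j.val := by
        ext x
        simp only [Finset.mem_filter, Finset.mem_range, Finset.mem_Ico,
          if_neg (by omega : ¬ j.val ≤ i.val)]
        omega
      rw [this, Nat.card_Ico]
      have := hdval.2 h
      omega
  have hcard2 : C2.card = N - d := by
    rw [hC2, filter_val_card (fun x =>
      if j.val ≤ i.val then (x < j.val ∨ i.val ≤ x) else (j.val < x ∨ x ≤ i.val))]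
    have hsplit := Finset.card_filter_add_card_filter_not (s := Finset.range N)
      (p := fun x => if j.val ≤ i.val then (x < j.val ∨ i.val ≤ x) else (j.val < x ∨ x ≤ i.val))
    rw [Finset.card_range] at hsplit
    rcases le_or_gt j.val i.val with h | h
    · have hneg : (Finset.range N).filter (fun x =>
          ¬ (if j.val ≤ i.val then (x < j.val ∨ i.val ≤ x) else (j.val < x ∨ x ≤ i.val))) =
          Finset.Ico j.val i.val := by
        ext x
        simp only [Finset.mem_filter, Finset.mem_range, Finset.mem_Ico, if_pos h]
        omega
      rw [hneg, Nat.card_Ico] at hsplit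
      have := hdval.1 h
      omega
    · have hneg : (Finset.range N).filter (fun x =>
          ¬ (if j.val ≤ i.val then (x < j.val ∨ i.val ≤ x) else (j.val < x ∨ x ≤ i.val))) =
          Finset.Ioc i.val j.val := by
        ext x
        simp only [Finset.mem_filter, Finset.mem_range, Finset.mem_Ioc,
          if_neg (by omega : ¬ j.val ≤ i.val)]
        omega
      rw [hneg, Nat.card_Ioc] at hsplit
      have := hdval.2 h
      omega
  have hcard4 : C4.card = N - 1 := by
    rw [hC4, filter_val_card (fun x => x ≠ j.val)]
    have hsplit := Finset.card_filter_add_card_filter_not (s := Finset.range N)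
      (p := fun x => x ≠ j.val)
    rw [Finset.card_range] at hsplit
    have hneg : (Finset.range N).filter (fun x => ¬ x ≠ j.val) = {j.val} := by
      ext x
      simp only [Finset.mem_filter, Finset.mem_range, Finset.mem_singleton, not_not]
      omega
    rw [hneg, Finset.card_singleton] at hsplit
    omega
  -- product of the three special values
  have hspecial : thetaM 2 (G z0) * thetaM 2 (G z1) * thetaM 2 (G z2) =
      ENNReal.ofReal (1/2) := by
    rcases le_or_gt j.val i.val with h | h
    · rw [hGz0, hGz1, hGz2, if_pos h, if_pos h, if_pos h, vOne0, vOne1, vHalf0,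
        ← ENNReal.ofReal_mul (by norm_num), ← ENNReal.ofReal_mul (by norm_num)]
      norm_num
    · rw [hGz0, hGz1, hGz2, if_neg (by omega), if_neg (by omega), if_neg (by omega),
        vHalf1, vOne0, vOne1,
        ← ENNReal.ofReal_mul (by norm_num), ← ENNReal.ofReal_mul (by norm_num)]
      norm_num
  -- measures
  have hGother : ∀ (C : Finset (Fin N)),
      ∀ a ∈ C, a ≠ z0 → a ≠ z1 → a ≠ z2 →
        (fun b => thetaM 2 (G b)) a = ENNReal.ofReal (3/4) := by
    intro C a ha h0 h1 h2
    have haN := a.isLt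
    have hw0 : a.val ≠ 0 := fun hcon => h0 (Fin.ext (by omega))
    have hw1 : a.val ≠ N - 1 := fun hcon => h1 (Fin.ext (by omega))
    have hw2 : a.val ≠ N - 2 := fun hcon => h2 (Fin.ext (by omega))
    have : G a = OrS := by
      rw [hG]; dsimp only; rw [if_neg hw0, if_neg hw1, if_neg hw2]
    dsimp only
    rw [this, hOrS, vOr]
  have hmX : thMeasure N 2 X = ENNReal.ofReal ((3/4 : ℝ) ^ d) := by
    rw [hX, prodEvent C1 G]
    rw [Finset.prod_congr rfl (fun a ha => by
      have hbd := hC1bound a ha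
      rw [hGval a (by omega) (by omega) (by omega), hOrS, vOr])]
    rw [Finset.prod_const, hcard1, ← ENNReal.ofReal_pow (by norm_num)]
  have hmY : thMeasure N 2 Y = ENNReal.ofReal ((1/2) * (3/4 : ℝ) ^ (N - d - 3)) := by
    rw [hY, prodEvent C2 G]
    rw [prod_erase3 C2 (fun a => thetaM 2 (G a)) z0 z1 z2 (ENNReal.ofReal (3/4))
      hz0C2 hz1C2 hz2C2 hd01 hd02 hd12 (hGother C2)]
    rw [hspecial, hcard2, ← ENNReal.ofReal_pow (by norm_num),
      ← ENNReal.ofReal_mul (by norm_num)]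
  have hmXY : thMeasure N 2 (X ∩ Y) = ENNReal.ofReal ((1/2) * (3/4 : ℝ) ^ (N - 4)) := by
    rw [hXY, prodEvent C4 G]
    rw [prod_erase3 C4 (fun a => thetaM 2 (G a)) z0 z1 z2 (ENNReal.ofReal (3/4))
      hz0C4 hz1C4 hz2C4 hd01 hd02 hd12 (hGother C4)]
    rw [hspecial, hcard4, ← ENNReal.ofReal_pow (by norm_num),
      ← ENNReal.ofReal_mul (by norm_num)]
    rw [show N - 1 - 3 = N - 4 from by omega]
  -- inclusion-exclusion
  have hYmeas : MeasurableSet Y := by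
    rw [hY]
    exact measurable_prodEvent C2 G hGmeas
  have hkey := measure_union_add_inter (μ := thMeasure N 2) X hYmeas
  have htoReal : (thMeasure N 2 (X ∪ Y)).toReal =
      (3/4 : ℝ) ^ d + (1/2) * (3/4 : ℝ) ^ (N - d - 3) - (1/2) * (3/4 : ℝ) ^ (N - 4) := by
    have h1 := congrArg ENNReal.toReal hkey
    rw [ENNReal.toReal_add (measure_ne_top _ _) (measure_ne_top _ _),
      ENNReal.toReal_add (measure_ne_top _ _) (measure_ne_top _ _),
      hmX, hmY, hmXY, ENNReal.toReal_ofReal (by positivity),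
      ENNReal.toReal_ofReal (by positivity), ENNReal.toReal_ofReal (by positivity)] at h1
    linarith
  have hsub : X ∪ Y ⊆ {μ : Fin N → Fin 2 → ℝ |
      i ∈ ltmSS (fun k : Fin 2 => if k = 0 then pathW N else permW2 N)
        (fun _ => Protocol.OR) {j} μ} := Set.union_subset hsubX hsubY
  unfold pLTM
  rw [← htoReal]
  exact ENNReal.toReal_mono (measure_ne_top _ _) (measure_mono hsub)

/-- protocol ordering on the permutation network: for `N ≥ 7`,
seed `{j}`, and indices as in Statements 10–12,
ℙ^{𝒢_P, OR}(i) > ℙ^{G_C}(i) > ℙ^{𝒢_P, AND}(i); equivalently, with `d = |i−j|`,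
(3/4)^d + (1/2)(3/4)^{N−d−3} − (1/2)(3/4)^{N−5} > (1/2)^d + (1/2)^{N−d} > (1/4)^d. -/
theorem permutation_ordering (N : ℕ) (hN : 7 ≤ N) (u : Fin N → Protocol)
    (i j : Fin N)
    (hi1 : 2 ≤ i.val) (hi2 : i.val ≤ N - 4)
    (hj1 : 1 ≤ j.val) (hj2 : j.val ≤ N - 3)
    (hd : 2 ≤ Nat.dist i.val j.val) :
    (pLTM (fun k : Fin 2 => if k = 0 then pathW N else permW2 N)
        (fun _ => Protocol.OR) {j} i >
      pLTM (fun _ : Fin 1 => cycleW N) u {j} i ∧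
     pLTM (fun _ : Fin 1 => cycleW N) u {j} i >
      pLTM (fun k : Fin 2 => if k = 0 then pathW N else permW2 N)
        (fun _ => Protocol.AND) {j} i) ∧
    ((3/4 : ℝ) ^ (Nat.dist i.val j.val) +
        (1/2 : ℝ) * (3/4 : ℝ) ^ (N - Nat.dist i.val j.val - 3) -
        (1/2 : ℝ) * (3/4 : ℝ) ^ (N - 5) >
      (1/2 : ℝ) ^ (Nat.dist i.val j.val) +
        (1/2 : ℝ) ^ (N - Nat.dist i.val j.val) ∧
     (1/2 : ℝ) ^ (Nat.dist i.val j.val) +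
        (1/2 : ℝ) ^ (N - Nat.dist i.val j.val) >
      (1/4 : ℝ) ^ (Nat.dist i.val j.val)) := by
  
  have hiN := i.isLt
  have hjN := j.isLt
  have hd5 : Nat.dist i.val j.val ≤ N - 5 := by
    rcases le_or_gt j.val i.val with h | h
    · have : Nat.dist i.val j.val = i.val - j.val := by
        rw [Nat.dist_comm]; exact Nat.dist_eq_sub_of_le h
      omega
    · have : Nat.dist i.val j.val = j.val - i.val := Nat.dist_eq_sub_of_le (by omega)
      omega
  set D := Nat.dist i.val j.val with hD
  set p := D - 2 with hp
  set q := N - D - 4 with hq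
  have Ed : D = 2 + p := by omega
  have ENd : N - D = 4 + q := by omega
  have ENd3 : N - D - 3 = 1 + q := by omega
  have EN2 : N - 2 = 4 + p + q := by omega
  have EN4 : N - 4 = 2 + p + q := by omega
  have EN5 : N - 5 = 1 + p + q := by omega
  have hcLe := cycle_le hN u i j hi1 hi2 hj1 hj2 hd
  have hcGe := cycle_ge hN u i j (by omega) (by omega) hj1 hj2
  have hoGe := or_ge hN i j hi1 hi2 hj1 hj2 hd
  have haLe := and_le hN i j hi1 hi2 hj1 hj2
  rw [← hD] at hcLe hcGe hoGe haLe
  rw [ENd, EN2, Ed] at hcLe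
  rw [ENd3, EN4, Ed] at hoGe
  rw [Ed] at hcGe haLe
  rw [ENd3, ENd, EN5, Ed]
  have hpow : (1/4 : ℝ)^(2+p) < (1/2 : ℝ)^(2+p) :=
    pow_lt_pow_left₀ (by norm_num) (by norm_num) (by omega)
  have h1 := arith1 p q
  have h3 := arith3 p q
  have hpos : (0:ℝ) < (1/2)^(4+q) := by positivity
  refine ⟨⟨by linarith, by linarith⟩, by linarith, by linarith⟩
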